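/- arXiv:1904.01859 — 8 statements merged into one kernel-verified Lean document; each statement's English description precedes it below -/
import Mathlib

section
/- The mean of the derived distribution satisfies E_g[X] = E_f[X] - ∫_a^b u(y)v(y) dy, hence E_g[X] ≤ E_f[X]. -/
open MeasureTheory Set Filter

lemma ibp_key_left (a b : ℝ) (u v u' : ℝ → ℝ)
    (hu : ∀ x ∈ Ioo a b, HasDerivAt u (u' x) x)
    (hu'_nonneg : ∀ x ∈ Ioo a b, 0 ≤ u' x)
    (hv_nonneg : ∀ x ∈ Ioo a b, 0 ≤ v x)
    (hua : Tendsto u (nhdsWithin a (Ioi a)) (nhds 0))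
    (hInt : IntegrableOn (fun y => u' y * v y) (Ioo a b))
    (hbound : ∫ y in Ioo a b, u' y * v y = 1)
    (ε : ℝ) (hε : 0 < ε) (c : ℝ) (hc : c ∈ Ioo a b) :
    ∃ x ∈ Ioo a c, u x * v x < ε := by
  by_contra hcon
  push_neg at hcon
  have hsub0 : Ioo a c ⊆ Ioo a b := Ioo_subset_Ioo le_rfl hc.2.le
  have hpos : ∀ y ∈ Ioo a c, 0 < u y := by
    intro y hy
    by_contra hle
    push_neg at hle
    have h1 : u y * v y ≤ 0 := mul_nonpos_of_nonpos_of_nonneg hle (hv_nonneg y (hsub0 hy))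
    have := hcon y hy
    linarith
  set c' : ℝ := (a + c) / 2 with hc'def
  have hac' : a < c' := by simp only [hc'def]; linarith [hc.1]
  have hc'c : c' < c := by simp only [hc'def]; linarith [hc.1]
  have hc'mem : c' ∈ Ioo a c := ⟨hac', hc'c⟩
  have huc'pos : 0 < u c' := hpos c' hc'mem
  set δ : ℝ := Real.exp (Real.log (u c') - ε⁻¹) with hδdef
  have hδpos : 0 < δ := Real.exp_pos _
  have hucont : ContinuousOn u (Ioo a b) := fun y hy => (hu y hy).continuousAt.continuousWithinAt
  -- pointwise bound on Ioo a c
  have hptbd : ∀ y ∈ Ioo a c, u' y / u y ≤ ε⁻¹ * (u' y * v y) := by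
    intro y hy
    have hyb := hsub0 hy
    have hup := hpos y hy
    rw [div_le_iff₀ hup]
    have h1 : u' y * ε ≤ u' y * (u y * v y) :=
      mul_le_mul_of_nonneg_left (hcon y hy) (hu'_nonneg y hyb)
    calc u' y = ε⁻¹ * (u' y * ε) := by field_simp
      _ ≤ ε⁻¹ * (u' y * (u y * v y)) := by
          exact mul_le_mul_of_nonneg_left h1 (inv_nonneg.mpr hε.le)
      _ = ε⁻¹ * (u' y * v y) * u y := by ring
  have hnn : ∀ y ∈ Ioo a c, 0 ≤ u' y / u y := fun y hy =>
    div_nonneg (hu'_nonneg y (hsub0 hy)) (hpos y hy).le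
  -- key claim
  have hkey : ∀ x ∈ Ioo a c', δ ≤ u x := by
    intro x hx
    have hxc' : x ≤ c' := hx.2.le
    have hIccsub : Icc x c' ⊆ Ioo a c := fun y hy =>
      ⟨lt_of_lt_of_le hx.1 hy.1, lt_of_le_of_lt hy.2 hc'c⟩
    have hIocsub : Ioc x c' ⊆ Ioo a c := fun y hy =>
      ⟨lt_trans hx.1 hy.1, lt_of_le_of_lt hy.2 hc'c⟩
    have hIocsubb : Ioc x c' ⊆ Ioo a b := fun y hy => hsub0 (hIocsub hy)
    -- integrability of the dominating function on Ioc x c'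
    have hgInt : IntegrableOn (fun y => ε⁻¹ * (u' y * v y)) (Ioc x c') :=
      (hInt.mono_set hIocsubb).const_mul _
    -- a.e. strong measurability of u'/u on Ioc x c'
    have hmeas : AEStronglyMeasurable (fun y => u' y / u y) (volume.restrict (Ioc x c')) := by
      have h1 : AEMeasurable (fun y => deriv u y / u y) (volume.restrict (Ioc x c')) := by
        apply AEMeasurable.div (measurable_deriv u).aemeasurable
        exact ((hucont.mono hIocsubb).aemeasurable measurableSet_Ioc)
      refine h1.aestronglyMeasurable.congr ?_
      filter_upwards [ae_restrict_mem measurableSet_Ioc] with y hy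
      have : deriv u y = u' y := (hu y (hIocsubb hy)).deriv
      simp [this]
    have hInt1 : IntervalIntegrable (fun y => u' y / u y) volume x c' := by
      rw [intervalIntegrable_iff_integrableOn_Ioc_of_le hxc']
      refine Integrable.mono' hgInt hmeas ?_
      filter_upwards [ae_restrict_mem measurableSet_Ioc] with y hy
      rw [Real.norm_eq_abs, abs_of_nonneg (hnn y (hIocsub hy))]
      exact hptbd y (hIocsub hy)
    have hInt2 : IntervalIntegrable (fun y => ε⁻¹ * (u' y * v y)) volume x c' := by
      rw [intervalIntegrable_iff_integrableOn_Ioc_of_le hxc']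
      exact hgInt
    -- FTC
    have hftc : ∫ y in x..c', u' y / u y = Real.log (u c') - Real.log (u x) := by
      apply intervalIntegral.integral_eq_sub_of_hasDerivAt (f := fun y => Real.log (u y))
      · intro y hy
        rw [uIcc_of_le hxc'] at hy
        exact (hu y (hsub0 (hIccsub hy))).log (ne_of_gt (hpos y (hIccsub hy)))
      · exact hInt1
    -- integral bound
    have hb1 : ∫ y in x..c', u' y / u y ≤ ∫ y in x..c', ε⁻¹ * (u' y * v y) := by
      apply intervalIntegral.integral_mono_on hxc' hInt1 hInt2
      intro y hy
      exact hptbd y (hIccsub hy)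
    have hb2 : ∫ y in x..c', ε⁻¹ * (u' y * v y) ≤ ε⁻¹ := by
      rw [intervalIntegral.integral_of_le hxc', MeasureTheory.integral_const_mul]
      have h3 : ∫ y in Ioc x c', u' y * v y ≤ ∫ y in Ioo a b, u' y * v y := by
        apply setIntegral_mono_set hInt
        · filter_upwards [ae_restrict_mem measurableSet_Ioo] with y hy
          exact mul_nonneg (hu'_nonneg y hy) (hv_nonneg y hy)
        · exact HasSubset.Subset.eventuallyLE hIocsubb
      calc ε⁻¹ * ∫ y in Ioc x c', u' y * v y ≤ ε⁻¹ * 1 := by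
            apply mul_le_mul_of_nonneg_left _ (inv_nonneg.mpr hε.le)
            rw [← hbound]; exact h3
        _ = ε⁻¹ := mul_one _
    have hlog : Real.log (u c') - Real.log (u x) ≤ ε⁻¹ := by
      rw [← hftc]; exact le_trans hb1 hb2
    have hxpos : 0 < u x := hpos x ⟨hx.1, lt_trans hx.2 hc'c⟩
    calc δ = Real.exp (Real.log (u c') - ε⁻¹) := rfl
      _ ≤ Real.exp (Real.log (u x)) := Real.exp_le_exp.mpr (by linarith)
      _ = u x := Real.exp_log hxpos
  -- contradiction with hua
  have h1 : ∀ᶠ x in nhdsWithin a (Ioi a), u x < δ :=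
    hua.eventually (eventually_lt_nhds hδpos)
  have h2 : ∀ᶠ x in nhdsWithin a (Ioi a), x ∈ Ioo a c' := by
    filter_upwards [Ioo_mem_nhdsGT hac'] with x hx
    exact hx
  obtain ⟨x, hx1, hx2⟩ := (h1.and h2).exists
  exact absurd (hkey x hx2) (not_le.mpr hx1)

lemma ibp_key_right (a b : ℝ) (u v v' : ℝ → ℝ)
    (hv : ∀ x ∈ Ioo a b, HasDerivAt v (v' x) x)
    (hv'_nonpos : ∀ x ∈ Ioo a b, v' x ≤ 0)
    (hu_nonneg : ∀ x ∈ Ioo a b, 0 ≤ u x)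
    (hvb : Tendsto v (nhdsWithin b (Iio b)) (nhds 0))
    (hInt : IntegrableOn (fun y => -(u y * v' y)) (Ioo a b))
    (hbound : ∫ y in Ioo a b, -(u y * v' y) = 1)
    (ε : ℝ) (hε : 0 < ε) (c : ℝ) (hc : c ∈ Ioo a b) :
    ∃ x ∈ Ioo c b, u x * v x < ε := by
  by_contra hcon
  push_neg at hcon
  have hsub0 : Ioo c b ⊆ Ioo a b := Ioo_subset_Ioo hc.1.le le_rfl
  have hpos : ∀ y ∈ Ioo c b, 0 < v y := by
    intro y hy
    by_contra hle
    push_neg at hle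
    have h1 : u y * v y ≤ 0 := mul_nonpos_of_nonneg_of_nonpos (hu_nonneg y (hsub0 hy)) hle
    have := hcon y hy
    linarith
  set c' : ℝ := (c + b) / 2 with hc'def
  have hcc' : c < c' := by simp only [hc'def]; linarith [hc.2]
  have hc'b : c' < b := by simp only [hc'def]; linarith [hc.2]
  have hc'mem : c' ∈ Ioo c b := ⟨hcc', hc'b⟩
  have hvc'pos : 0 < v c' := hpos c' hc'mem
  set δ : ℝ := Real.exp (Real.log (v c') - ε⁻¹) with hδdef
  have hδpos : 0 < δ := Real.exp_pos _
  have hvcont : ContinuousOn v (Ioo a b) := fun y hy => (hv y hy).continuousAt.continuousWithinAt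
  have hptbd : ∀ y ∈ Ioo c b, -(v' y / v y) ≤ ε⁻¹ * (-(u y * v' y)) := by
    intro y hy
    have hyb := hsub0 hy
    have hvp := hpos y hy
    rw [show -(v' y / v y) = -(v' y) / v y by ring, div_le_iff₀ hvp]
    have h1 : -(v' y) * ε ≤ -(v' y) * (u y * v y) :=
      mul_le_mul_of_nonneg_left (hcon y hy) (neg_nonneg.mpr (hv'_nonpos y hyb))
    calc -(v' y) = ε⁻¹ * (-(v' y) * ε) := by field_simp
      _ ≤ ε⁻¹ * (-(v' y) * (u y * v y)) :=
          mul_le_mul_of_nonneg_left h1 (inv_nonneg.mpr hε.le)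
      _ = ε⁻¹ * (-(u y * v' y)) * v y := by ring
  have hnn : ∀ y ∈ Ioo c b, 0 ≤ -(v' y / v y) := by
    intro y hy
    rw [show -(v' y / v y) = -(v' y) / v y by ring]
    exact div_nonneg (neg_nonneg.mpr (hv'_nonpos y (hsub0 hy))) (hpos y hy).le
  have hkey : ∀ x ∈ Ioo c' b, δ ≤ v x := by
    intro x hx
    have hc'x : c' ≤ x := hx.1.le
    have hIccsub : Icc c' x ⊆ Ioo c b := fun y hy =>
      ⟨lt_of_lt_of_le hcc' hy.1, lt_of_le_of_lt hy.2 hx.2⟩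
    have hIocsub : Ioc c' x ⊆ Ioo c b := fun y hy =>
      ⟨lt_trans hcc' hy.1, lt_of_le_of_lt hy.2 hx.2⟩
    have hIocsubb : Ioc c' x ⊆ Ioo a b := fun y hy => hsub0 (hIocsub hy)
    have hgInt : IntegrableOn (fun y => ε⁻¹ * (-(u y * v' y))) (Ioc c' x) :=
      (hInt.mono_set hIocsubb).const_mul _
    have hmeas : AEStronglyMeasurable (fun y => -(v' y / v y)) (volume.restrict (Ioc c' x)) := by
      have h1 : AEMeasurable (fun y => -(deriv v y / v y)) (volume.restrict (Ioc c' x)) := by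
        apply AEMeasurable.neg
        apply AEMeasurable.div (measurable_deriv v).aemeasurable
        exact ((hvcont.mono hIocsubb).aemeasurable measurableSet_Ioc)
      refine h1.aestronglyMeasurable.congr ?_
      filter_upwards [ae_restrict_mem measurableSet_Ioc] with y hy
      have : deriv v y = v' y := (hv y (hIocsubb hy)).deriv
      simp [this]
    have hInt1 : IntervalIntegrable (fun y => -(v' y / v y)) volume c' x := by
      rw [intervalIntegrable_iff_integrableOn_Ioc_of_le hc'x]
      refine Integrable.mono' hgInt hmeas ?_
      filter_upwards [ae_restrict_mem measurableSet_Ioc] with y hy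
      rw [Real.norm_eq_abs, abs_of_nonneg (hnn y (hIocsub hy))]
      exact hptbd y (hIocsub hy)
    have hInt2 : IntervalIntegrable (fun y => ε⁻¹ * (-(u y * v' y))) volume c' x := by
      rw [intervalIntegrable_iff_integrableOn_Ioc_of_le hc'x]
      exact hgInt
    have hftc : ∫ y in c'..x, -(v' y / v y)
        = -Real.log (v x) - -Real.log (v c') := by
      apply intervalIntegral.integral_eq_sub_of_hasDerivAt (f := fun y => -Real.log (v y))
      · intro y hy
        rw [uIcc_of_le hc'x] at hy
        exact ((hv y (hsub0 (hIccsub hy))).log (ne_of_gt (hpos y (hIccsub hy)))).neg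
      · exact hInt1
    have hb1 : ∫ y in c'..x, -(v' y / v y) ≤ ∫ y in c'..x, ε⁻¹ * (-(u y * v' y)) := by
      apply intervalIntegral.integral_mono_on hc'x hInt1 hInt2
      intro y hy
      exact hptbd y (hIccsub hy)
    have hb2 : ∫ y in c'..x, ε⁻¹ * (-(u y * v' y)) ≤ ε⁻¹ := by
      rw [intervalIntegral.integral_of_le hc'x, MeasureTheory.integral_const_mul]
      have h3 : ∫ y in Ioc c' x, -(u y * v' y) ≤ ∫ y in Ioo a b, -(u y * v' y) := by
        apply setIntegral_mono_set hInt
        · filter_upwards [ae_restrict_mem measurableSet_Ioo] with y hy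
          exact neg_nonneg.mpr (mul_nonpos_of_nonneg_of_nonpos (hu_nonneg y hy) (hv'_nonpos y hy))
        · exact HasSubset.Subset.eventuallyLE hIocsubb
      calc ε⁻¹ * ∫ y in Ioc c' x, -(u y * v' y) ≤ ε⁻¹ * 1 := by
            apply mul_le_mul_of_nonneg_left _ (inv_nonneg.mpr hε.le)
            rw [← hbound]; exact h3
        _ = ε⁻¹ := mul_one _
    have hlog : Real.log (v c') - Real.log (v x) ≤ ε⁻¹ := by
      have := hftc ▸ le_trans hb1 hb2
      linarith [this]
    have hxpos : 0 < v x := hpos x ⟨lt_trans hcc' hx.1, hx.2⟩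
    calc δ = Real.exp (Real.log (v c') - ε⁻¹) := rfl
      _ ≤ Real.exp (Real.log (v x)) := Real.exp_le_exp.mpr (by linarith)
      _ = v x := Real.exp_log hxpos
  have h1 : ∀ᶠ x in nhdsWithin b (Iio b), v x < δ :=
    hvb.eventually (eventually_lt_nhds hδpos)
  have h2 : ∀ᶠ x in nhdsWithin b (Iio b), x ∈ Ioo c' b := by
    filter_upwards [Ioo_mem_nhdsLT hc'b] with x hx
    exact hx
  obtain ⟨x, hx1, hx2⟩ := (h1.and h2).exists
  exact absurd (hkey x hx2) (not_le.mpr hx1)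

/-- The mean of the derived distribution satisfies
E_g[X] = E_f[X] - ∫_a^b u(y)v(y) dy, hence E_g[X] ≤ E_f[X]. -/
theorem ibp_mean (a b : ℝ) (hab : a < b) (u v u' v' : ℝ → ℝ)
    (hu : ∀ x ∈ Ioo a b, HasDerivAt u (u' x) x)
    (hv : ∀ x ∈ Ioo a b, HasDerivAt v (v' x) x)
    (hu_nonneg : ∀ x ∈ Ioo a b, 0 ≤ u x)
    (hu'_nonneg : ∀ x ∈ Ioo a b, 0 ≤ u' x)
    (hv_nonneg : ∀ x ∈ Ioo a b, 0 ≤ v x)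
    (hv'_nonpos : ∀ x ∈ Ioo a b, v' x ≤ 0)
    (hua : Tendsto u (nhdsWithin a (Ioi a)) (nhds 0))
    (hvb : Tendsto v (nhdsWithin b (Iio b)) (nhds 0))
    (hf : ∫ x in Ioo a b, -(u x * v' x) = 1)
    (hg : ∫ x in Ioo a b, u' x * v x = 1)
    (hmean_f : IntegrableOn (fun y => y * (-(u y * v' y))) (Ioo a b))
    (hmean_g : IntegrableOn (fun y => y * (u' y * v y)) (Ioo a b))
    (huv_int : IntegrableOn (fun y => u y * v y) (Ioo a b)) :
    (∫ y in Ioo a b, y * (u' y * v y))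
      = (∫ y in Ioo a b, y * (-(u y * v' y))) - ∫ y in Ioo a b, u y * v y ∧
    (∫ y in Ioo a b, y * (u' y * v y)) ≤ ∫ y in Ioo a b, y * (-(u y * v' y)) := by
  -- integrability of the densities
  have hIf : IntegrableOn (fun y => -(u y * v' y)) (Ioo a b) := by
    by_contra h
    rw [MeasureTheory.integral_undef h] at hf
    norm_num at hf
  have hIg : IntegrableOn (fun y => u' y * v y) (Ioo a b) := by
    by_contra h
    rw [MeasureTheory.integral_undef h] at hg
    norm_num at hg
  have hm3 : IntegrableOn (fun y => y * (u y * v' y)) (Ioo a b) := by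
    have he : (fun y => y * (u y * v' y)) = fun y => -(y * -(u y * v' y)) := by
      funext y; ring
    rw [he]
    exact hmean_f.neg
  set F : ℝ → ℝ := fun y => y * (u y * v y) with hFdef
  set F' : ℝ → ℝ := fun y => u y * v y + (y * (u' y * v y) + y * (u y * v' y)) with hF'def
  have hIF' : IntegrableOn F' (Ioo a b) := huv_int.add (hmean_g.add hm3)
  -- sequence endpoints
  have hposba : (0:ℝ) < b - a := by linarith
  have hn2 : ∀ n : ℕ, (1:ℝ) < (n:ℝ) + 2 := by
    intro n; have : (0:ℝ) ≤ n := Nat.cast_nonneg n; linarith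
  have hcn : ∀ n : ℕ, a + (b - a) / ((n:ℝ) + 2) ∈ Ioo a b := by
    intro n
    have h1 : 0 < (b - a) / ((n:ℝ) + 2) := by positivity
    have h2 : (b - a) / ((n:ℝ) + 2) < b - a := div_lt_self hposba (hn2 n)
    exact ⟨by linarith, by linarith⟩
  have hdn : ∀ n : ℕ, b - (b - a) / ((n:ℝ) + 2) ∈ Ioo a b := by
    intro n
    have h1 : 0 < (b - a) / ((n:ℝ) + 2) := by positivity
    have h2 : (b - a) / ((n:ℝ) + 2) < b - a := div_lt_self hposba (hn2 n)
    exact ⟨by linarith, by linarith⟩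
  have hhalf : ∀ n : ℕ, (b - a) / ((n:ℝ) + 2) ≤ (b - a) / 2 := by
    intro n
    have : (0:ℝ) ≤ n := Nat.cast_nonneg n
    gcongr <;> linarith
  have hxex : ∀ n : ℕ, ∃ x ∈ Ioo a (a + (b - a) / ((n:ℝ) + 2)), u x * v x < 1 / ((n:ℝ) + 1) :=
    fun n => ibp_key_left a b u v u' hu hu'_nonneg hv_nonneg hua hIg hg
      (1 / ((n:ℝ) + 1)) (by positivity) _ (hcn n)
  have hyex : ∀ n : ℕ, ∃ x ∈ Ioo (b - (b - a) / ((n:ℝ) + 2)) b, u x * v x < 1 / ((n:ℝ) + 1) :=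
    fun n => ibp_key_right a b u v v' hv hv'_nonpos hu_nonneg hvb hIf hf
      (1 / ((n:ℝ) + 1)) (by positivity) _ (hdn n)
  choose X hXmem hXsm using hxex
  choose Y hYmem hYsm using hyex
  have hXb : ∀ n, X n ∈ Ioo a b := fun n =>
    ⟨(hXmem n).1, lt_trans (hXmem n).2 (hcn n).2⟩
  have hYb : ∀ n, Y n ∈ Ioo a b := fun n =>
    ⟨lt_trans (hdn n).1 (hYmem n).1, (hYmem n).2⟩
  have hXY : ∀ n, X n < Y n := by
    intro n
    have h1 := (hXmem n).2
    have h2 := (hYmem n).1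
    have h3 := hhalf n
    linarith
  -- tendsto
  have hq : Tendsto (fun n : ℕ => (b - a) / ((n:ℝ) + 2)) atTop (nhds 0) := by
    have h1 : Tendsto (fun n : ℕ => ((n:ℝ) + 2)) atTop atTop :=
      tendsto_atTop_add_const_right _ 2 tendsto_natCast_atTop_atTop
    have h2 := h1.inv_tendsto_atTop
    have h3 := h2.const_mul (b - a)
    simpa [div_eq_mul_inv] using h3
  have hXtendn : Tendsto X atTop (nhds a) := by
    apply tendsto_of_tendsto_of_tendsto_of_le_of_le (tendsto_const_nhds (x := a))
      (by simpa using (tendsto_const_nhds (x := a)).add hq)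
    · exact fun n => (hXmem n).1.le
    · exact fun n => (hXmem n).2.le
  have hYtendn : Tendsto Y atTop (nhds b) := by
    apply tendsto_of_tendsto_of_tendsto_of_le_of_le
      (by simpa using (tendsto_const_nhds (x := b)).sub hq) (tendsto_const_nhds (x := b))
    · exact fun n => (hYmem n).1.le
    · exact fun n => (hYmem n).2.le
  -- aecover and convergence of integrals
  have hcov : AECover (volume.restrict (Ioo a b)) atTop (fun n => Ioc (X n) (Y n)) :=
    aecover_Ioo_of_Ioc hXtendn hYtendn
  have htend := hcov.integral_tendsto_of_countably_generated hIF'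
  have hsubn : ∀ n, Ioc (X n) (Y n) ⊆ Ioo a b := fun n y hy =>
    ⟨lt_trans (hXb n).1 hy.1, lt_of_le_of_lt hy.2 (hYb n).2⟩
  have hftc : ∀ n, ∫ y in Ioc (X n) (Y n), F' y ∂(volume.restrict (Ioo a b))
      = F (Y n) - F (X n) := by
    intro n
    rw [Measure.restrict_restrict measurableSet_Ioc, inter_eq_self_of_subset_left (hsubn n)]
    rw [← intervalIntegral.integral_of_le (hXY n).le]
    apply intervalIntegral.integral_eq_sub_of_hasDerivAt
    · intro t ht
      rw [uIcc_of_le (hXY n).le] at ht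
      have htmem : t ∈ Ioo a b :=
        ⟨lt_of_lt_of_le (hXb n).1 ht.1, lt_of_le_of_lt ht.2 (hYb n).2⟩
      have hd := (hasDerivAt_id t).mul ((hu t htmem).mul (hv t htmem))
      convert hd using 1
      · rfl
      · funext y; simp only [hFdef, Pi.mul_apply, id_eq]
      · simp only [hF'def, Pi.mul_apply, id_eq]; ring
    · rw [intervalIntegrable_iff_integrableOn_Ioc_of_le (hXY n).le]
      exact hIF'.mono_set (hsubn n)
  have hone : Tendsto (fun n : ℕ => 1 / ((n:ℝ) + 1)) atTop (nhds 0) :=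
    tendsto_one_div_add_atTop_nhds_zero_nat
  have habs : ∀ (Z : ℕ → ℝ), (∀ n, Z n ∈ Ioo a b) → (∀ n, u (Z n) * v (Z n) < 1 / ((n:ℝ) + 1)) →
      Tendsto (fun n => F (Z n)) atTop (nhds 0) := by
    intro Z hZb hZsm
    have hbd : ∀ n : ℕ, ‖F (Z n)‖ ≤ (|a| + |b|) * (1 / ((n:ℝ) + 1)) := by
      intro n
      have hm := hZb n
      have hw : 0 ≤ u (Z n) * v (Z n) := mul_nonneg (hu_nonneg _ hm) (hv_nonneg _ hm)
      have h1 : |Z n| ≤ |a| + |b| := by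
        rw [abs_le]
        constructor
        · have := neg_abs_le a
          have := abs_nonneg b
          linarith [hm.1]
        · have := le_abs_self b
          have := abs_nonneg a
          linarith [hm.2]
      have h2 : |u (Z n) * v (Z n)| ≤ 1 / ((n:ℝ) + 1) := by
        rw [abs_of_nonneg hw]; exact (hZsm n).le
      calc ‖F (Z n)‖ = |Z n| * |u (Z n) * v (Z n)| := by
            rw [Real.norm_eq_abs, hFdef, abs_mul]
        _ ≤ (|a| + |b|) * (1 / ((n:ℝ) + 1)) :=
            mul_le_mul h1 h2 (abs_nonneg _) (by positivity)
    exact squeeze_zero_norm hbd (by simpa using hone.const_mul (|a| + |b|))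
  have hFX := habs X hXb hXsm
  have hFY := habs Y hYb hYsm
  have hdiff : Tendsto (fun n => F (Y n) - F (X n)) atTop (nhds 0) := by
    simpa using hFY.sub hFX
  have h0 : ∫ y in Ioo a b, F' y = 0 := by
    apply tendsto_nhds_unique _ hdiff
    refine htend.congr fun n => hftc n
  have hadd1 : IntegrableOn (fun y => y * (u' y * v y) + y * (u y * v' y)) (Ioo a b) :=
    hmean_g.add hm3
  have h1 : ∫ y in Ioo a b, (u y * v y + (y * (u' y * v y) + y * (u y * v' y)))
      = (∫ y in Ioo a b, u y * v y)
        + ∫ y in Ioo a b, (y * (u' y * v y) + y * (u y * v' y)) :=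
    integral_add huv_int hadd1
  have h2 : ∫ y in Ioo a b, (y * (u' y * v y) + y * (u y * v' y))
      = (∫ y in Ioo a b, y * (u' y * v y)) + ∫ y in Ioo a b, y * (u y * v' y) :=
    integral_add hmean_g hm3
  have hsplit : ∫ y in Ioo a b, F' y
      = (∫ y in Ioo a b, u y * v y)
        + ((∫ y in Ioo a b, y * (u' y * v y)) + ∫ y in Ioo a b, y * (u y * v' y)) := by
    rw [show (∫ y in Ioo a b, F' y)
        = ∫ y in Ioo a b, (u y * v y + (y * (u' y * v y) + y * (u y * v' y))) from rfl,
      h1, h2]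
  have hneg : ∫ y in Ioo a b, y * (-(u y * v' y)) = -∫ y in Ioo a b, y * (u y * v' y) := by
    rw [← integral_neg]
    congr 1
    funext y
    ring
  have hInonneg : 0 ≤ ∫ y in Ioo a b, u y * v y :=
    setIntegral_nonneg measurableSet_Ioo fun y hy =>
      mul_nonneg (hu_nonneg y hy) (hv_nonneg y hy)
  constructor
  · rw [hneg]; linarith [h0, hsplit]
  · rw [hneg]; linarith [h0, hsplit]
end

section
/- The function g(t) = α√π · Φ(-√(2αt)) / √(αt) for t > 0 is a probability density function on (0,∞), i.e., g ≥ 0 and ∫_0^∞ g(t) dt = 1. -/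
open MeasureTheory Set Real Filter Topology

/-- The standard normal distribution function Φ. -/
noncomputable def Phi (z : ℝ) : ℝ :=
  (Real.sqrt (2 * Real.pi))⁻¹ * ∫ y in Set.Iic z, Real.exp (-y ^ 2 / 2)

namespace ModExpAux

noncomputable def F (u : ℝ) : ℝ := ∫ y in Ioi u, Real.exp (-y ^ 2 / 2)

lemma gauss_cont : Continuous (fun y : ℝ => Real.exp (-y ^ 2 / 2)) := by
  fun_prop

lemma gauss_int : Integrable (fun y : ℝ => Real.exp (-y ^ 2 / 2)) := by
  have h := integrable_exp_neg_mul_sq (b := (1:ℝ)/2) (by norm_num)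
  have e : ∀ y : ℝ, -y ^ 2 / 2 = -(1/2 : ℝ) * y ^ 2 := fun y => by ring
  simpa [e] using h

lemma Phi_neg (z : ℝ) : Phi (-z) = (Real.sqrt (2 * Real.pi))⁻¹ * F z := by
  unfold Phi F
  congr 1
  have h := integral_comp_neg_Iic (-z) (fun y : ℝ => Real.exp (-y ^ 2 / 2))
  simp only [neg_neg, neg_sq] at h
  exact h

lemma F_nonneg (u : ℝ) : 0 ≤ F u :=
  setIntegral_nonneg measurableSet_Ioi fun y _ => (Real.exp_pos _).le

lemma Phi_nonneg (z : ℝ) : 0 ≤ Phi z :=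
  mul_nonneg (inv_nonneg.2 (Real.sqrt_nonneg _))
    (setIntegral_nonneg measurableSet_Iic fun y _ => (Real.exp_pos _).le)

lemma gauss_le (y : ℝ) : Real.exp (-y ^ 2 / 2) ≤ Real.exp (1/2) * Real.exp (-y) := by
  rw [← Real.exp_add]
  apply Real.exp_le_exp.2
  nlinarith [sq_nonneg (y - 1)]

lemma F_le (u : ℝ) : F u ≤ Real.exp (1/2) * Real.exp (-u) := by
  have h2 : IntegrableOn (fun y : ℝ => Real.exp (1/2) * Real.exp (-y)) (Ioi u) := by
    have := (exp_neg_integrableOn_Ioi u one_pos).const_mul (Real.exp (1/2))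
    simpa [IntegrableOn] using this
  calc F u ≤ ∫ y in Ioi u, Real.exp (1/2) * Real.exp (-y) := by
        refine setIntegral_mono_on gauss_int.integrableOn h2 measurableSet_Ioi
          fun y _ => gauss_le y
    _ = Real.exp (1/2) * Real.exp (-u) := by
        rw [MeasureTheory.integral_const_mul, integral_exp_neg_Ioi]

lemma hasDerivAt_F (u : ℝ) : HasDerivAt F (-Real.exp (-u ^ 2 / 2)) u := by
  have key : ∀ v : ℝ, F v =
      ((∫ y : ℝ, Real.exp (-y ^ 2 / 2)) - ∫ y in Iic (0:ℝ), Real.exp (-y ^ 2 / 2))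
        - ∫ y in (0:ℝ)..v, Real.exp (-y ^ 2 / 2) := by
    intro v
    have h1 : (∫ y in Iic v, Real.exp (-y ^ 2 / 2)) + F v = ∫ y : ℝ, Real.exp (-y ^ 2 / 2) :=
      intervalIntegral.integral_Iic_add_Ioi gauss_int.integrableOn gauss_int.integrableOn
    have h2 : (∫ y in Iic v, Real.exp (-y ^ 2 / 2)) - (∫ y in Iic (0:ℝ), Real.exp (-y ^ 2 / 2))
        = ∫ y in (0:ℝ)..v, Real.exp (-y ^ 2 / 2) :=
      intervalIntegral.integral_Iic_sub_Iic gauss_int.integrableOn gauss_int.integrableOn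
    linarith
  have hd : HasDerivAt (fun v : ℝ => ∫ y in (0:ℝ)..v, Real.exp (-y ^ 2 / 2))
      (Real.exp (-u ^ 2 / 2)) u :=
    intervalIntegral.integral_hasDerivAt_right gauss_int.intervalIntegrable
      gauss_cont.stronglyMeasurable.stronglyMeasurableAtFilter
      gauss_cont.continuousAt
  have := hd.const_sub ((∫ y : ℝ, Real.exp (-y ^ 2 / 2)) - ∫ y in Iic (0:ℝ), Real.exp (-y ^ 2 / 2))
  have hF : F = fun v : ℝ =>
      ((∫ y : ℝ, Real.exp (-y ^ 2 / 2)) - ∫ y in Iic (0:ℝ), Real.exp (-y ^ 2 / 2))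
        - ∫ y in (0:ℝ)..v, Real.exp (-y ^ 2 / 2) := funext key
  rw [hF]
  exact this

lemma F_cont : Continuous F :=
  continuous_iff_continuousAt.2 fun u => (hasDerivAt_F u).continuousAt

lemma F_integrable : IntegrableOn F (Ioi (0:ℝ)) := by
  have hb : IntegrableOn (fun u : ℝ => Real.exp (1/2) * Real.exp (-u)) (Ioi (0:ℝ)) := by
    have := (exp_neg_integrableOn_Ioi (0:ℝ) one_pos).const_mul (Real.exp (1/2))
    simpa [IntegrableOn] using this
  refine Integrable.mono hb
    F_cont.aestronglyMeasurable.restrict (Eventually.of_forall fun u => ?_)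
  rw [Real.norm_of_nonneg (F_nonneg u), Real.norm_of_nonneg (by positivity)]
  exact F_le u

lemma tendsto_mul_F : Tendsto (fun u : ℝ => u * F u) atTop (𝓝 0) := by
  have h1 : Tendsto (fun u : ℝ => Real.exp (1/2) * (u ^ 1 * Real.exp (-u))) atTop
      (𝓝 (Real.exp (1/2) * 0)) :=
    (tendsto_pow_mul_exp_neg_atTop_nhds_zero 1).const_mul _
  rw [mul_zero] at h1
  refine squeeze_zero' ?_ ?_ h1
  · filter_upwards [eventually_ge_atTop (0:ℝ)] with u hu
    exact mul_nonneg hu (F_nonneg u)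
  · filter_upwards [eventually_ge_atTop (0:ℝ)] with u hu
    calc u * F u ≤ u * (Real.exp (1/2) * Real.exp (-u)) :=
          mul_le_mul_of_nonneg_left (F_le u) hu
      _ = Real.exp (1/2) * (u ^ 1 * Real.exp (-u)) := by ring

lemma tendsto_exp_sq : Tendsto (fun u : ℝ => Real.exp (-u ^ 2 / 2)) atTop (𝓝 0) := by
  have h1 : Tendsto (fun u : ℝ => Real.exp (1/2) * Real.exp (-u)) atTop
      (𝓝 (Real.exp (1/2) * 0)) :=
    (Real.tendsto_exp_neg_atTop_nhds_zero).const_mul _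
  rw [mul_zero] at h1
  refine squeeze_zero' (Eventually.of_forall fun u => (Real.exp_pos _).le)
    (Eventually.of_forall fun u => gauss_le u) h1

lemma integral_F : ∫ u in Ioi (0:ℝ), F u = 1 := by
  set g : ℝ → ℝ := fun v => v * F v - Real.exp (-v ^ 2 / 2) with hg_def
  have hg : ∀ u : ℝ, HasDerivAt g (F u) u := by
    intro u
    have hinner : HasDerivAt (fun v : ℝ => -v ^ 2 / 2) (-u) u := by
      have := ((hasDerivAt_pow 2 u).neg).div_const 2
      simpa using this.congr_deriv (by push_cast; ring)
    have h2 : HasDerivAt (fun v : ℝ => Real.exp (-v ^ 2 / 2))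
        (Real.exp (-u ^ 2 / 2) * (-u)) u := hinner.exp
    have h1 := (hasDerivAt_id u).mul (hasDerivAt_F u)
    have := h1.sub h2
    have e : g = id * F - fun v => Real.exp (-v ^ 2 / 2) := by
      funext v; simp [hg_def]
    rw [e]
    refine this.congr_deriv ?_
    simp only [one_mul, id]
    ring
  have htend : Tendsto g atTop (𝓝 0) := by
    have := tendsto_mul_F.sub tendsto_exp_sq
    simpa using this
  have := integral_Ioi_of_hasDerivAt_of_tendsto (a := 0) (f := g) (f' := F)
    (hg 0).continuousAt.continuousWithinAt (fun x _ => hg x) F_integrable htend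
  rw [this]
  simp [hg_def]

end ModExpAux

open ModExpAux in
/-- g(t) = α√π Φ(-√(2αt))/√(αt) is a probability density on (0,∞). -/
theorem modified_exponential_is_density (α : ℝ) (hα : 0 < α) :
    (∀ t ∈ Set.Ioi (0:ℝ),
        0 ≤ α * Real.sqrt Real.pi * Phi (-Real.sqrt (2 * α * t)) / Real.sqrt (α * t)) ∧
    ∫ t in Set.Ioi (0:ℝ),
        α * Real.sqrt Real.pi * Phi (-Real.sqrt (2 * α * t)) / Real.sqrt (α * t) = 1 := by
  constructor
  · intro t _
    apply div_nonneg _ (Real.sqrt_nonneg _)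
    exact mul_nonneg (mul_nonneg hα.le (Real.sqrt_nonneg _)) (Phi_nonneg _)
  · have hsa : (0:ℝ) < Real.sqrt α := Real.sqrt_pos.2 hα
    have hs2a : (0:ℝ) < Real.sqrt (2 * α) := Real.sqrt_pos.2 (by linarith)
    set f : ℝ → ℝ := fun t => α * Real.sqrt Real.pi * Phi (-Real.sqrt (2 * α * t)) / Real.sqrt (α * t) with hf_def
    have step1 : (∫ x in Ioi (0:ℝ), ((2:ℝ) * x ^ ((2:ℝ) - 1)) • f (x ^ (2:ℝ)))
        = ∫ t in Ioi (0:ℝ), f t := integral_comp_rpow_Ioi_of_pos (by norm_num)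
    have step2 : (∫ x in Ioi (0:ℝ), ((2:ℝ) * x ^ ((2:ℝ) - 1)) • f (x ^ (2:ℝ)))
        = ∫ x in Ioi (0:ℝ), 2 * Real.sqrt α * Real.sqrt Real.pi
            * Phi (-(Real.sqrt (2 * α) * x)) := by
      refine setIntegral_congr_fun measurableSet_Ioi fun x hx => ?_
      have hx0 : (0:ℝ) < x := hx
      have hrp : x ^ ((2:ℝ) - 1) = x := by
        norm_num
      have hrp2 : x ^ ((2:ℝ)) = x ^ 2 := by
        rw [show (2:ℝ) = ((2:ℕ):ℝ) by norm_num, Real.rpow_natCast]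
      rw [smul_eq_mul, hrp, hrp2, hf_def]
      have e1 : Real.sqrt (2 * α * x ^ 2) = Real.sqrt (2 * α) * x := by
        rw [Real.sqrt_mul (by linarith) (x ^ 2), Real.sqrt_sq hx0.le]
      have e2 : Real.sqrt (α * x ^ 2) = Real.sqrt α * x := by
        rw [Real.sqrt_mul hα.le (x ^ 2), Real.sqrt_sq hx0.le]
      simp only [e1, e2]
      have hsq : Real.sqrt α * Real.sqrt α = α := Real.mul_self_sqrt hα.le
      set P := Phi (-(Real.sqrt (2 * α) * x)) with hP
      field_simp
      linear_combination (-P) * hsq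
    have step3 : (∫ x in Ioi (0:ℝ), 2 * Real.sqrt α * Real.sqrt Real.pi
            * Phi (-(Real.sqrt (2 * α) * x)))
        = 2 * Real.sqrt α * Real.sqrt Real.pi
            * ((Real.sqrt (2 * α))⁻¹ * ∫ u in Ioi (0:ℝ), Phi (-u)) := by
      rw [MeasureTheory.integral_const_mul]
      congr 1
      have := integral_comp_mul_left_Ioi (fun u : ℝ => Phi (-u)) 0 hs2a
      rw [mul_zero] at this
      rw [this, smul_eq_mul]
    have step4 : (∫ u in Ioi (0:ℝ), Phi (-u)) = (Real.sqrt (2 * Real.pi))⁻¹ := by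
      simp_rw [Phi_neg]
      rw [MeasureTheory.integral_const_mul, integral_F, mul_one]
    rw [← step1, step2, step3, step4]
    have h2 : Real.sqrt (2 * α) = Real.sqrt 2 * Real.sqrt α := Real.sqrt_mul (by norm_num) α
    have hpi : Real.sqrt (2 * Real.pi) = Real.sqrt 2 * Real.sqrt Real.pi :=
      Real.sqrt_mul (by norm_num) Real.pi
    have h22 : Real.sqrt 2 * Real.sqrt 2 = 2 := Real.mul_self_sqrt (by norm_num)
    have hsp : (0:ℝ) < Real.sqrt Real.pi := Real.sqrt_pos.2 Real.pi_pos
    have hs2 : (0:ℝ) < Real.sqrt 2 := Real.sqrt_pos.2 (by norm_num)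
    rw [h2, hpi]
    field_simp
    linear_combination (-1 : ℝ) * h22
end

section
/- For the density g(t) = α√π Φ(-√(2αt})/√(αt) on (0,∞), the n-th moment is E[T^n] = α^{-n} n!/(2n+1) for each natural number n ≥ 1; in particular the mean is 1/(3α) and the second moment is 2/(5α²). -/
open MeasureTheory Set Real

/-- The modified exponential density. -/
noncomputable def modExpPdf (α t : ℝ) : ℝ :=
  α * Real.sqrt Real.pi * Phi (-Real.sqrt (2 * α * t)) / Real.sqrt (α * t)

section Aux
open Filter Topology

lemma integrable_gauss : Integrable (fun y : ℝ => Real.exp (-y ^ 2 / 2)) := by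
  have h := integrable_exp_neg_mul_sq (show (0:ℝ) < 1/2 by norm_num)
  refine h.congr ?_
  · filter_upwards with y; ring_nf

lemma continuous_gauss : Continuous (fun y : ℝ => Real.exp (-y ^ 2 / 2)) := by
  fun_prop

lemma hasDerivAt_Phi (z : ℝ) :
    HasDerivAt Phi ((Real.sqrt (2 * Real.pi))⁻¹ * Real.exp (-z ^ 2 / 2)) z := by
  have hint : ∀ a b : ℝ, IntervalIntegrable (fun y : ℝ => Real.exp (-y ^ 2 / 2)) volume a b :=
    fun a b => integrable_gauss.intervalIntegrable
  have hG : HasDerivAt (fun z : ℝ => ∫ y in (0:ℝ)..z, Real.exp (-y ^ 2 / 2))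
      (Real.exp (-z ^ 2 / 2)) z :=
    intervalIntegral.integral_hasDerivAt_right (hint 0 z)
      (continuous_gauss.stronglyMeasurableAtFilter _ _) continuous_gauss.continuousAt
  have heq : ∀ w : ℝ, Phi w = (Real.sqrt (2 * Real.pi))⁻¹ *
      ((∫ y in Set.Iic (0:ℝ), Real.exp (-y ^ 2 / 2)) + ∫ y in (0:ℝ)..w, Real.exp (-y ^ 2 / 2)) := by
    intro w
    rw [← intervalIntegral.integral_Iic_sub_Iic (integrable_gauss.integrableOn)
        (integrable_gauss.integrableOn)]
    simp [Phi]
  have := ((hG.const_add (∫ y in Set.Iic (0:ℝ), Real.exp (-y ^ 2 / 2))).const_mul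
    (Real.sqrt (2 * Real.pi))⁻¹)
  exact this.congr_of_eventuallyEq (Filter.Eventually.of_forall heq)

lemma continuous_Phi : Continuous Phi :=
  continuous_iff_continuousAt.2 fun z => (hasDerivAt_Phi z).continuousAt

lemma Phi_nonneg (z : ℝ) : 0 ≤ Phi z := by
  apply mul_nonneg (by positivity)
  exact setIntegral_nonneg measurableSet_Iic (fun y _ => (Real.exp_pos _).le)

lemma gauss_deriv (y : ℝ) :
    HasDerivAt (fun y : ℝ => -Real.exp (-y ^ 2 / 2)) (y * Real.exp (-y ^ 2 / 2)) y := by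
  have h1 : HasDerivAt (fun y : ℝ => -y ^ 2 / 2) (-y) y := by
    have := ((hasDerivAt_pow 2 y).neg).div_const 2
    exact this.congr_deriv (by norm_num; ring)
  have := (h1.exp).neg
  exact this.congr_deriv (by ring)

lemma gauss_tail_tendsto : Tendsto (fun y : ℝ => -Real.exp (-y ^ 2 / 2)) atTop (𝓝 0) := by
  rw [show (0:ℝ) = -0 by norm_num]
  refine Tendsto.neg ?_
  refine Real.tendsto_exp_atBot.comp ?_
  have h : Tendsto (fun y : ℝ => y ^ 2) atTop atTop := tendsto_pow_atTop two_ne_zero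
  have h2 : Tendsto (fun y : ℝ => y ^ 2 / 2) atTop atTop :=
    h.atTop_div_const (show (0:ℝ) < 2 by norm_num)
  have h3 := tendsto_neg_atBot_iff.2 h2
  refine h3.congr fun y => by ring

lemma gauss_tail_eq {x : ℝ} (hx : 0 ≤ x) :
    ∫ y in Set.Ioi x, y * Real.exp (-y ^ 2 / 2) = Real.exp (-x ^ 2 / 2) := by
  have := integral_Ioi_of_hasDerivAt_of_nonneg (g := fun y : ℝ => -Real.exp (-y ^ 2 / 2))
    (g' := fun y => y * Real.exp (-y ^ 2 / 2)) (a := x) (l := 0)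
    ((by fun_prop : Continuous fun y : ℝ => -Real.exp (-y ^ 2 / 2)).continuousWithinAt) (fun y _ => gauss_deriv y)
    (fun y hy => mul_nonneg (hx.trans (le_of_lt hy)) (Real.exp_pos _).le)
    gauss_tail_tendsto
  rw [this]; ring

lemma gauss_tail_integrable {x : ℝ} (hx : 0 ≤ x) :
    IntegrableOn (fun y => y * Real.exp (-y ^ 2 / 2)) (Set.Ioi x) :=
  integrableOn_Ioi_deriv_of_nonneg ((by fun_prop : Continuous fun y : ℝ => -Real.exp (-y ^ 2 / 2)).continuousWithinAt) (fun y _ => gauss_deriv y)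
    (fun y hy => mul_nonneg (hx.trans (le_of_lt hy)) (Real.exp_pos _).le) gauss_tail_tendsto

lemma Phi_neg_le {x : ℝ} (hx : 1 ≤ x) :
    Phi (-x) ≤ (Real.sqrt (2 * Real.pi))⁻¹ * Real.exp (-x ^ 2 / 2) := by
  have h0 : (0:ℝ) ≤ x := le_trans zero_le_one hx
  have h1 : (∫ y in Set.Iic (-x), Real.exp (-y ^ 2 / 2))
      = ∫ y in Set.Ioi x, Real.exp (-y ^ 2 / 2) := by
    have := integral_comp_neg_Iic (-x) (fun y : ℝ => Real.exp (-y ^ 2 / 2))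
    rw [neg_neg] at this
    rw [← this]
    refine setIntegral_congr_fun measurableSet_Iic fun y _ => by rw [neg_pow]; ring_nf
  have h2 : (∫ y in Set.Ioi x, Real.exp (-y ^ 2 / 2))
      ≤ ∫ y in Set.Ioi x, y * Real.exp (-y ^ 2 / 2) := by
    refine setIntegral_mono_on integrable_gauss.integrableOn (gauss_tail_integrable h0)
      measurableSet_Ioi fun y hy => ?_
    nth_rewrite 1 [← one_mul (Real.exp _)]
    exact mul_le_mul_of_nonneg_right (hx.trans (le_of_lt hy)) (Real.exp_pos _).le
  calc Phi (-x) = (Real.sqrt (2 * Real.pi))⁻¹ * ∫ y in Set.Iic (-x), Real.exp (-y ^ 2 / 2) := rfl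
    _ ≤ (Real.sqrt (2 * Real.pi))⁻¹ * Real.exp (-x ^ 2 / 2) := by
        rw [h1]
        exact mul_le_mul_of_nonneg_left (h2.trans_eq (gauss_tail_eq h0)) (by positivity)

lemma exp_int_val (α : ℝ) (hα : 0 < α) (n : ℕ) :
    ∫ s in Set.Ioi (0:ℝ), s ^ n * Real.exp (-(α * s))
      = (n.factorial : ℝ) / α ^ (n + 1) := by
  have h := Real.integral_rpow_mul_exp_neg_mul_Ioi
    (show (0:ℝ) < (n:ℝ) + 1 by positivity) hα
  rw [show ((n:ℝ) + 1 - 1) = (n:ℝ) by ring] at h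
  have e : ∀ s ∈ Set.Ioi (0:ℝ), s ^ ((n:ℝ)) * Real.exp (-(α * s))
      = s ^ n * Real.exp (-(α * s)) := by
    intro s _; rw [Real.rpow_natCast]
  rw [setIntegral_congr_fun measurableSet_Ioi e] at h
  rw [h, show ((n:ℝ) + 1) = ((n + 1 : ℕ) : ℝ) by push_cast; ring, Real.rpow_natCast]
  rw [show ((n + 1 : ℕ) : ℝ) = (n:ℝ) + 1 by push_cast; ring, Real.Gamma_nat_eq_factorial]
  rw [div_pow, one_pow]
  ring

lemma exp_int_integrable (α : ℝ) (hα : 0 < α) (n : ℕ) :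
    IntegrableOn (fun s : ℝ => s ^ n * Real.exp (-(α * s))) (Set.Ioi 0) := by
  have h := integrableOn_rpow_mul_exp_neg_mul_rpow
    (show (-1:ℝ) < (n:ℝ) by exact lt_of_lt_of_le (by norm_num) (Nat.cast_nonneg n)) (by norm_num : (0:ℝ) < 1) hα
  refine h.congr_fun (fun s hs => ?_) measurableSet_Ioi
  dsimp only
  rw [Real.rpow_natCast, Real.rpow_one, neg_mul]

lemma pow_exp_tendsto (α : ℝ) (hα : 0 < α) (n : ℕ) :
    Tendsto (fun t : ℝ => t ^ n * Real.exp (-(α * t))) atTop (𝓝 0) := by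
  have h0 := tendsto_pow_mul_exp_neg_atTop_nhds_zero n
  have hl : Tendsto (fun t : ℝ => α * t) atTop atTop :=
    Tendsto.const_mul_atTop hα tendsto_id
  have h1 := (h0.comp hl).const_mul ((α ^ n)⁻¹)
  rw [mul_zero] at h1
  refine h1.congr fun t => ?_
  simp only [Function.comp]
  rw [mul_pow]
  field_simp

lemma deriv_step (α : ℝ) (hα : 0 < α) (m : ℕ) {t : ℝ} (ht : 0 < t) :
    HasDerivAt (fun t : ℝ =>
      2 * Real.sqrt α * Real.sqrt Real.pi / (2 * (m + 1 : ℕ) + 1) *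
        ((t ^ (m + 1 : ℕ) * Real.sqrt t) * Phi (-Real.sqrt (2 * α * t)))
      + α / (2 * (m + 1 : ℕ) + 1) * ∫ s in (0:ℝ)..t, s ^ (m + 1 : ℕ) * Real.exp (-(α * s)))
      (t ^ (m + 1 : ℕ) * modExpPdf α t) t := by
  set n : ℕ := m + 1 with hn
  have h2at : 0 < 2 * α * t := by positivity
  have h1 : HasDerivAt (fun t : ℝ => t ^ n * Real.sqrt t)
      ((n : ℝ) * t ^ (n - 1) * Real.sqrt t + t ^ n * (1 / (2 * Real.sqrt t))) t :=
    (hasDerivAt_pow n t).mul (Real.hasDerivAt_sqrt ht.ne')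
  have hinner : HasDerivAt (fun t : ℝ => 2 * α * t) (2 * α) t := by
    simpa using (hasDerivAt_id t).const_mul (2 * α)
  have h2 : HasDerivAt (fun t : ℝ => Real.sqrt (2 * α * t))
      (1 / (2 * Real.sqrt (2 * α * t)) * (2 * α)) t :=
    (Real.hasDerivAt_sqrt h2at.ne').comp t hinner
  have h3 : HasDerivAt (fun t : ℝ => Phi (-Real.sqrt (2 * α * t)))
      ((Real.sqrt (2 * Real.pi))⁻¹ * Real.exp (-(α * t)) *
        (-(1 / (2 * Real.sqrt (2 * α * t)) * (2 * α)))) t := by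
    have := (hasDerivAt_Phi (-Real.sqrt (2 * α * t))).comp t h2.neg
    refine this.congr_deriv ?_
    rw [neg_pow, Real.sq_sqrt h2at.le]
    ring
  have hcontI : Continuous (fun s : ℝ => s ^ n * Real.exp (-(α * s))) := by fun_prop
  have h4 : HasDerivAt (fun t : ℝ => ∫ s in (0:ℝ)..t, s ^ n * Real.exp (-(α * s)))
      (t ^ n * Real.exp (-(α * t))) t :=
    intervalIntegral.integral_hasDerivAt_right (hcontI.intervalIntegrable _ _)
      (hcontI.stronglyMeasurableAtFilter _ _) hcontI.continuousAt
  have hcomb := ((h1.mul h3).const_mul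
      (2 * Real.sqrt α * Real.sqrt Real.pi / (2 * (n : ℝ) + 1))).add
      (h4.const_mul (α / (2 * (n : ℝ) + 1)))
  refine hcomb.congr_deriv ?_
  -- algebraic identity
  have hst := Real.sqrt_pos.2 ht
  have hsa := Real.sqrt_pos.2 hα
  have hs2 := Real.sqrt_pos.2 (show (0:ℝ) < 2 by norm_num)
  have hsp := Real.sqrt_pos.2 Real.pi_pos
  have e1 : Real.sqrt (2 * α * t) = Real.sqrt 2 * Real.sqrt α * Real.sqrt t := by
    rw [Real.sqrt_mul (by positivity), Real.sqrt_mul (by norm_num)]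
  have e2 : Real.sqrt (α * t) = Real.sqrt α * Real.sqrt t := Real.sqrt_mul hα.le t
  have e3 : Real.sqrt (2 * Real.pi) = Real.sqrt 2 * Real.sqrt Real.pi :=
    Real.sqrt_mul (by norm_num) _
  rw [modExpPdf, e1, e2, e3]
  set st := Real.sqrt t with hstdef
  set sa := Real.sqrt α with hsadef
  set s2 := Real.sqrt 2 with hs2def
  set sp := Real.sqrt Real.pi with hspdef
  have hst2 : st * st = t := Real.mul_self_sqrt ht.le
  have hsa2 : sa * sa = α := Real.mul_self_sqrt hα.le
  have hs22 : s2 * s2 = 2 := Real.mul_self_sqrt (by norm_num)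
  have hsp2 : sp * sp = Real.pi := Real.mul_self_sqrt Real.pi_pos.le
  rw [hn]
  push_cast
  rw [← hst2, ← hsa2, ← hs22]
  field_simp
  ring

lemma modExpPdf_nonneg (α : ℝ) (hα : 0 < α) (t : ℝ) : 0 ≤ modExpPdf α t := by
  unfold modExpPdf
  have := Phi_nonneg (-Real.sqrt (2 * α * t))
  positivity

lemma key_moment (α : ℝ) (hα : 0 < α) (m : ℕ) :
    ∫ t in Set.Ioi (0:ℝ), t ^ (m + 1 : ℕ) * modExpPdf α t
      = ((m + 1 : ℕ).factorial : ℝ) / (α ^ (m + 1 : ℕ) * (2 * (m + 1 : ℕ) + 1)) := by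
  set n : ℕ := m + 1 with hn
  set K : ℝ := 2 * Real.sqrt α * Real.sqrt Real.pi / (2 * (n : ℕ) + 1) with hK
  set A : ℝ := α / (2 * (n : ℕ) + 1) with hA
  set c : ℝ := ((n : ℕ).factorial : ℝ) / (α ^ (n : ℕ) * (2 * (n : ℕ) + 1)) with hc
  have hcontI : Continuous (fun s : ℝ => s ^ n * Real.exp (-(α * s))) := by fun_prop
  set f : ℝ → ℝ := fun t =>
      K * ((t ^ (n : ℕ) * Real.sqrt t) * Phi (-Real.sqrt (2 * α * t)))
      + A * ∫ s in (0:ℝ)..t, s ^ (n : ℕ) * Real.exp (-(α * s)) with hf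
  have hKpos : 0 ≤ K := by
    rw [hK]; positivity
  have hderiv : ∀ t ∈ Set.Ioi (0:ℝ),
      HasDerivAt f (t ^ (n : ℕ) * modExpPdf α t) t := fun t ht => deriv_step α hα m ht
  have hcont : ContinuousWithinAt f (Set.Ici (0:ℝ)) 0 := by
    refine Continuous.continuousWithinAt ?_
    refine ((continuous_const.mul ?_).add (continuous_const.mul ?_))
    · exact ((continuous_pow n).mul Real.continuous_sqrt).mul
        (continuous_Phi.comp (Real.continuous_sqrt.comp (by fun_prop)).neg)
    · exact intervalIntegral.continuous_primitive
        (fun a b => hcontI.intervalIntegrable a b) 0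
  have hpos : ∀ t ∈ Set.Ioi (0:ℝ), 0 ≤ t ^ (n : ℕ) * modExpPdf α t := fun t ht =>
    mul_nonneg (pow_nonneg (le_of_lt ht) _) (modExpPdf_nonneg α hα t)
  -- limit of the primitive
  have T2 : Tendsto (fun t : ℝ => ∫ s in (0:ℝ)..t, s ^ (n : ℕ) * Real.exp (-(α * s)))
      atTop (𝓝 ((n.factorial : ℝ) / α ^ (n + 1))) := by
    rw [← exp_int_val α hα n]
    exact intervalIntegral_tendsto_integral_Ioi 0 (exp_int_integrable α hα n) tendsto_id
  -- limit of the first term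
  have T1 : Tendsto (fun t : ℝ =>
      K * ((t ^ (n : ℕ) * Real.sqrt t) * Phi (-Real.sqrt (2 * α * t)))) atTop (𝓝 0) := by
    have hub : Tendsto (fun t : ℝ =>
        (K * (Real.sqrt (2 * Real.pi))⁻¹) * (t ^ (n + 1) * Real.exp (-(α * t))))
        atTop (𝓝 0) := by
      have := (pow_exp_tendsto α hα (n + 1)).const_mul (K * (Real.sqrt (2 * Real.pi))⁻¹)
      rwa [mul_zero] at this
    refine tendsto_of_tendsto_of_tendsto_of_le_of_le' tendsto_const_nhds hub ?_ ?_
    · filter_upwards [eventually_ge_atTop (0:ℝ)] with t ht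
      have := Phi_nonneg (-Real.sqrt (2 * α * t))
      positivity
    · filter_upwards [eventually_ge_atTop (max 1 (1 / (2 * α)))] with t ht
      have ht1 : (1:ℝ) ≤ t := le_trans (le_max_left _ _) ht
      have ht0 : (0:ℝ) ≤ t := zero_le_one.trans ht1
      have h2at : (1:ℝ) ≤ 2 * α * t := by
        have h' : 1 / (2 * α) ≤ t := le_trans (le_max_right _ _) ht
        rw [div_le_iff₀ (by positivity)] at h'
        linarith [h']
      have hsq : (1:ℝ) ≤ Real.sqrt (2 * α * t) := Real.one_le_sqrt.2 h2at
      have hPle : Phi (-Real.sqrt (2 * α * t))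
          ≤ (Real.sqrt (2 * Real.pi))⁻¹ * Real.exp (-(α * t)) := by
        have := Phi_neg_le hsq
        rwa [Real.sq_sqrt (by positivity : (0:ℝ) ≤ 2 * α * t),
          show -(2 * α * t) / 2 = -(α * t) by ring] at this
      have hsqrt_le : Real.sqrt t ≤ t := by
        calc Real.sqrt t ≤ Real.sqrt (t * t) := Real.sqrt_le_sqrt (by nlinarith)
          _ = t := Real.sqrt_mul_self ht0
      calc K * ((t ^ (n : ℕ) * Real.sqrt t) * Phi (-Real.sqrt (2 * α * t)))
          ≤ K * ((t ^ (n : ℕ) * Real.sqrt t) *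
              ((Real.sqrt (2 * Real.pi))⁻¹ * Real.exp (-(α * t)))) := by
            refine mul_le_mul_of_nonneg_left (mul_le_mul_of_nonneg_left hPle ?_) hKpos
            positivity
        _ = (K * (Real.sqrt (2 * Real.pi))⁻¹) * ((t ^ (n : ℕ) * Real.sqrt t)
              * Real.exp (-(α * t))) := by ring
        _ ≤ (K * (Real.sqrt (2 * Real.pi))⁻¹) * (t ^ (n + 1) * Real.exp (-(α * t))) := by
            have hKc : 0 ≤ K * (Real.sqrt (2 * Real.pi))⁻¹ := by positivity
            refine mul_le_mul_of_nonneg_left (mul_le_mul_of_nonneg_right ?_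
              (Real.exp_pos _).le) hKc
            rw [pow_succ]
            exact mul_le_mul_of_nonneg_left hsqrt_le (by positivity)
  have htends : Tendsto f atTop (𝓝 c) := by
    have := T1.add (T2.const_mul A)
    rw [zero_add] at this
    have hval : A * ((n.factorial : ℝ) / α ^ (n + 1)) = c := by
      rw [hA, hc, pow_succ]
      field_simp
    rwa [hval] at this
  have hint := integral_Ioi_of_hasDerivAt_of_nonneg hcont hderiv hpos htends
  rw [hint, hf]
  have hn1 : n ≠ 0 := Nat.succ_ne_zero m
  simp [zero_pow hn1]

end Aux

/-- the n-th moment is α^{-n} n!/(2n+1) for n ≥ 1; in particular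
the mean is 1/(3α) and the second moment is 2/(5α²). -/
theorem modified_exponential_moments (α : ℝ) (hα : 0 < α) :
    (∀ n : ℕ, 1 ≤ n →
      ∫ t in Set.Ioi (0:ℝ), t ^ n * modExpPdf α t
        = (Nat.factorial n : ℝ) / (α ^ n * (2 * n + 1))) ∧
    (∫ t in Set.Ioi (0:ℝ), t * modExpPdf α t = 1 / (3 * α)) ∧
    (∫ t in Set.Ioi (0:ℝ), t ^ 2 * modExpPdf α t = 2 / (5 * α ^ 2)) := by
  have key : ∀ n : ℕ, 1 ≤ n →
      ∫ t in Set.Ioi (0:ℝ), t ^ n * modExpPdf α t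
        = (Nat.factorial n : ℝ) / (α ^ n * (2 * n + 1)) := by
    intro n hn
    obtain ⟨m, rfl⟩ : ∃ m, n = m + 1 := ⟨n - 1, (Nat.succ_pred_eq_of_pos hn).symm⟩
    exact key_moment α hα m
  refine ⟨key, ?_, ?_⟩
  · have h := key 1 le_rfl
    simp only [pow_one] at h
    rw [h]
    norm_num
    ring
  · have h := key 2 (by norm_num)
    rw [h]
    norm_num
    ring
end

section
/- In the SBP construction with u_{-1}=0, the distribution functions satisfy G_k = F_k + u_k v_{k+1} for all 0 ≤ k ≤ n; in particular G_k ≥ F_k, so the parent distribution stochastically dominates the descendant. -/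
/-- in the SBP construction with u_{-1}=0, the distribution
functions satisfy G_k = F_k + u_k v_{k+1}, and so F_k ≤ G_k: the parent
stochastically dominates the descendant. -/
theorem sbp_distribution_functions (u v : ℤ → ℝ) (n : ℤ) (hn : 0 ≤ n)
    (hum1 : u (-1) = 0)
    (hu_mono : ∀ i, -1 ≤ i → i ≤ n → u i ≤ u (i + 1))
    (hu_nonneg : ∀ i, -1 ≤ i → i ≤ n → 0 ≤ u i)
    (hv_anti : ∀ i, 0 ≤ i → i ≤ n → v (i + 1) ≤ v i)
    (hv_nonneg : ∀ i, 0 ≤ i → i ≤ n + 1 → 0 ≤ v i)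
    (hvn1 : v (n + 1) = 0)
    (hp_nonneg : ∀ i ∈ Finset.Icc (0:ℤ) n, 0 ≤ -(u i * (v (i + 1) - v i)))
    (hp_sum : ∑ i ∈ Finset.Icc (0:ℤ) n, -(u i * (v (i + 1) - v i)) = 1) :
    ∀ k, 0 ≤ k → k ≤ n →
      (∑ i ∈ Finset.Icc (0:ℤ) k, v i * (u i - u (i - 1)))
        = (∑ i ∈ Finset.Icc (0:ℤ) k, -(u i * (v (i + 1) - v i))) + u k * v (k + 1) ∧
      (∑ i ∈ Finset.Icc (0:ℤ) k, -(u i * (v (i + 1) - v i)))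
        ≤ ∑ i ∈ Finset.Icc (0:ℤ) k, v i * (u i - u (i - 1)) := by
  have key : ∀ k, 0 ≤ k → k ≤ n →
      (∑ i ∈ Finset.Icc (0:ℤ) k, v i * (u i - u (i - 1)))
        = (∑ i ∈ Finset.Icc (0:ℤ) k, -(u i * (v (i + 1) - v i))) + u k * v (k + 1) := by
    refine Int.le_induction ?_ ?_
    · intro _
      simp only [Finset.Icc_self, Finset.sum_singleton]
      have h : (0:ℤ) - 1 = -1 := by norm_num
      rw [h, hum1, zero_add]
      ring
    · intro k hk ih hkn
      have ih' := ih (by omega)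
      have hmem : k + 1 ∉ Finset.Icc (0:ℤ) k := by simp
      have hins : Finset.Icc (0:ℤ) (k+1) = insert (k+1) (Finset.Icc (0:ℤ) k) := by
        ext x; simp [Finset.mem_Icc]; omega
      rw [hins, Finset.sum_insert hmem, Finset.sum_insert hmem, ih']
      have h : (k:ℤ) + 1 - 1 = k := by ring
      rw [h]
      ring
  intro k hk hkn
  refine ⟨key k hk hkn, ?_⟩
  rw [key k hk hkn]
  have h1 : 0 ≤ u k := hu_nonneg k (by omega) hkn
  have h2 : 0 ≤ v (k + 1) := hv_nonneg (k+1) (by omega) (by omega)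
  nlinarith
end

section
/- In the SBP construction with u_{-1}=0, the mean of the descendant distribution satisfies μ_g = μ - ∑_{i=1}^n (∑_{j=0}^{i-1} u_j) p_i / u_i, where μ = ∑ i p_i is the parent mean (sum over i with u_i > 0; p_i/u_i interpreted via v). -/
lemma sbp_abel (u : ℤ → ℝ) (hum1 : u (-1) = 0) :
    ∀ j : ℤ, 0 ≤ j →
      ∑ i ∈ Finset.Icc (0:ℤ) j, (i : ℝ) * (u i - u (i - 1))
        = (j : ℝ) * u j - ∑ i ∈ Finset.Icc (0:ℤ) (j - 1), u i := by
  refine Int.le_induction ?_ ?_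
  · simp [hum1]
  · intro j hj ih
    have h1 : Finset.Icc (0:ℤ) (j + 1) = insert (j + 1) (Finset.Icc 0 j) := by
      ext x; simp [Finset.mem_Icc]; omega
    have h2 : (j + 1 : ℤ) ∉ Finset.Icc (0:ℤ) j := by simp
    have h3 : (j + 1 - 1 : ℤ) = j := by ring
    rw [h1, Finset.sum_insert h2, ih, h3,
      show Finset.Icc (0:ℤ) j = insert j (Finset.Icc 0 (j - 1)) from by
        ext x; simp [Finset.mem_Icc]; omega,
      Finset.sum_insert (by simp)]
    push_cast
    ring

/-- in the SBP construction with u_{-1}=0, u_i > 0 for i ≥ 0,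
v_i = ∑_{j=i}^n p_j/u_j, q_i = v_i(u_i - u_{i-1}), the descendant mean is
μ_g = μ - ∑_{i=1}^n (∑_{j=0}^{i-1} u_j) p_i / u_i. -/
theorem sbp_mean (u p : ℤ → ℝ) (n : ℤ) (hn : 0 ≤ n)
    (hum1 : u (-1) = 0)
    (hu_pos : ∀ i, 0 ≤ i → i ≤ n → 0 < u i)
    (hu_mono : ∀ i, -1 ≤ i → i ≤ n → u i ≤ u (i + 1))
    (hp_nonneg : ∀ i ∈ Finset.Icc (0:ℤ) n, 0 ≤ p i)
    (hp_sum : ∑ i ∈ Finset.Icc (0:ℤ) n, p i = 1) :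
    ∑ i ∈ Finset.Icc (0:ℤ) n,
        (i : ℝ) * ((∑ j ∈ Finset.Icc i n, p j / u j) * (u i - u (i - 1)))
      = (∑ i ∈ Finset.Icc (0:ℤ) n, (i : ℝ) * p i)
        - ∑ i ∈ Finset.Icc (1:ℤ) n, (∑ j ∈ Finset.Icc (0:ℤ) (i - 1), u j) * p i / u i := by
  have key : ∑ i ∈ Finset.Icc (0:ℤ) n,
        (i : ℝ) * ((∑ j ∈ Finset.Icc i n, p j / u j) * (u i - u (i - 1)))
      = ∑ j ∈ Finset.Icc (0:ℤ) n,
          (p j / u j) * ((j : ℝ) * u j - ∑ i ∈ Finset.Icc (0:ℤ) (j - 1), u i) := by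
    calc ∑ i ∈ Finset.Icc (0:ℤ) n,
          (i : ℝ) * ((∑ j ∈ Finset.Icc i n, p j / u j) * (u i - u (i - 1)))
        = ∑ i ∈ Finset.Icc (0:ℤ) n, ∑ j ∈ Finset.Icc i n,
            (p j / u j) * ((i : ℝ) * (u i - u (i - 1))) := by
          refine Finset.sum_congr rfl fun i _ => ?_
          rw [Finset.sum_mul, Finset.mul_sum]
          exact Finset.sum_congr rfl fun j _ => by ring
      _ = ∑ j ∈ Finset.Icc (0:ℤ) n, ∑ i ∈ Finset.Icc (0:ℤ) j,
            (p j / u j) * ((i : ℝ) * (u i - u (i - 1))) := by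
          refine Finset.sum_comm' ?_
          intro i j; simp only [Finset.mem_Icc]; omega
      _ = ∑ j ∈ Finset.Icc (0:ℤ) n,
            (p j / u j) * ((j : ℝ) * u j - ∑ i ∈ Finset.Icc (0:ℤ) (j - 1), u i) := by
          refine Finset.sum_congr rfl fun j hj => ?_
          rw [← Finset.mul_sum, sbp_abel u hum1 j (Finset.mem_Icc.mp hj).1]
  rw [key]
  have key2 : ∀ j ∈ Finset.Icc (0:ℤ) n,
      (p j / u j) * ((j : ℝ) * u j - ∑ i ∈ Finset.Icc (0:ℤ) (j - 1), u i)
        = (j : ℝ) * p j - (∑ i ∈ Finset.Icc (0:ℤ) (j - 1), u i) * p j / u j := by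
    intro j hj
    obtain ⟨h0, h1⟩ := Finset.mem_Icc.mp hj
    have hu : u j ≠ 0 := ne_of_gt (hu_pos j h0 h1)
    field_simp
  rw [Finset.sum_congr rfl key2, Finset.sum_sub_distrib]
  congr 1
  rw [show Finset.Icc (0:ℤ) n = insert 0 (Finset.Icc 1 n) from by
    ext x; simp [Finset.mem_Icc]; omega, Finset.sum_insert (by simp)]
  simp
end

section
/- Let (p_i) be a pmf on {0,…,n} with pgf H_0(x) = ∑_{j=0}^n p_j x^j, and for r > 1 define q_i = H_i(1/r) r^i (1 - 1/r) / (1 - H_0(1/r)/r) where H_i(x) = ∑_{j=i}^n p_j x^j. Then (q_i) is a pmf on {0,…,n}, and its mean equals (μ+1)/(1 - H_0(1/r)/r) - r/(r-1), where μ is the mean of (p_i). -/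
/-- Partial generating function H_i(x) = ∑_{j=i}^n p_j x^j. -/
noncomputable def H (p : ℕ → ℝ) (n i : ℕ) (x : ℝ) : ℝ :=
  ∑ j ∈ Finset.Icc i n, p j * x ^ j

lemma sum_i_geom (r : ℝ) (m : ℕ) :
    (r - 1) ^ 2 * ∑ i ∈ Finset.range m, (i : ℝ) * r ^ i
      = ((m : ℝ) - 1) * r ^ (m + 1) - (m : ℝ) * r ^ m + r := by
  induction m with
  | zero => simp
  | succ m ih =>
    rw [Finset.sum_range_succ, mul_add, ih]
    push_cast
    ring

lemma key_swap (p : ℕ → ℝ) (n : ℕ) (x : ℝ) (c : ℕ → ℝ) :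
    ∑ i ∈ Finset.range (n + 1), c i * H p n i x
      = ∑ j ∈ Finset.range (n + 1), p j * x ^ j * ∑ i ∈ Finset.range (j + 1), c i := by
  simp only [H, Finset.mul_sum]
  have hIcc : ∀ i, Finset.Icc i n = Finset.Ico i (n + 1) := fun i =>
    (Finset.Ico_add_one_right_eq_Icc ..).symm
  simp_rw [hIcc, Finset.range_eq_Ico]
  rw [Finset.sum_Ico_Ico_comm]
  refine Finset.sum_congr rfl fun j _ => Finset.sum_congr rfl fun i _ => ?_
  ring

/-- for a pmf (p_i) on {0,…,n} and r > 1, the sequence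
q_i = H_i(1/r) r^i (1 - 1/r)/(1 - H_0(1/r)/r) is a pmf with mean
(μ+1)/(1 - H_0(1/r)/r) - r/(r-1). -/
theorem r_distribution (p : ℕ → ℝ) (n : ℕ) (r : ℝ) (hr : 1 < r)
    (hp_nonneg : ∀ i ∈ Finset.range (n + 1), 0 ≤ p i)
    (hp_sum : ∑ i ∈ Finset.range (n + 1), p i = 1) :
    (∀ i ∈ Finset.range (n + 1),
      0 ≤ H p n i (1 / r) * r ^ i * (1 - 1 / r) / (1 - H p n 0 (1 / r) / r)) ∧
    (∑ i ∈ Finset.range (n + 1),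
      H p n i (1 / r) * r ^ i * (1 - 1 / r) / (1 - H p n 0 (1 / r) / r)) = 1 ∧
    (∑ i ∈ Finset.range (n + 1),
      (i : ℝ) * (H p n i (1 / r) * r ^ i * (1 - 1 / r) / (1 - H p n 0 (1 / r) / r)))
      = ((∑ i ∈ Finset.range (n + 1), (i : ℝ) * p i) + 1) / (1 - H p n 0 (1 / r) / r)
        - r / (r - 1) := by
  have hr0 : (0 : ℝ) < r := lt_trans one_pos hr
  have hr0' : r ≠ 0 := ne_of_gt hr0
  have hr1 : r - 1 ≠ 0 := sub_ne_zero.mpr (ne_of_gt hr)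
  set x : ℝ := 1 / r with hxdef
  have hx0 : 0 < x := by positivity
  have hx1 : x < 1 := by
    rw [hxdef]; rw [div_lt_one hr0]; exact hr
  have hxr : x * r = 1 := by rw [hxdef]; field_simp
  -- nonnegativity of H
  have hHnn : ∀ i, 0 ≤ H p n i x := by
    intro i
    apply Finset.sum_nonneg
    intro j hj
    have hj' : j ∈ Finset.range (n + 1) := by
      simp only [Finset.mem_Icc] at hj
      simp [Nat.lt_succ_iff, hj.2]
    exact mul_nonneg (hp_nonneg j hj') (le_of_lt (pow_pos hx0 j))
  -- H_0 ≤ 1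
  have hIcc0 : Finset.Icc 0 n = Finset.range (n + 1) := by
    ext j; simp [Nat.lt_succ_iff]
  have hH0le : H p n 0 x ≤ 1 := by
    rw [H, hIcc0, ← hp_sum]
    apply Finset.sum_le_sum
    intro j hj
    have := hp_nonneg j hj
    nlinarith [pow_le_one₀ (le_of_lt hx0) (le_of_lt hx1) (n := j)]
  have hD : 0 < 1 - H p n 0 x / r := by
    have h1 : H p n 0 x / r ≤ 1 / r := by gcongr
    rw [← hxdef] at h1
    linarith
  have hD' : 1 - H p n 0 x / r ≠ 0 := ne_of_gt hD
  have hrH0 : r - H p n 0 x ≠ 0 := by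
    have : 0 < r - H p n 0 x := by nlinarith
    exact ne_of_gt this
  -- per-exponent identities
  have hxj : ∀ j : ℕ, x ^ j * r ^ j = 1 := by
    intro j; rw [← mul_pow, hxr, one_pow]
  have e1 : ∀ j : ℕ, x ^ j * r ^ (j + 1) = r := by
    intro j; rw [pow_add, ← mul_assoc, hxj, one_mul, pow_one]
  have e2 : ∀ j : ℕ, x ^ j * r ^ (j + 2) = r ^ 2 := by
    intro j; rw [pow_add, ← mul_assoc, hxj, one_mul]
  -- sum A
  have A : ∑ i ∈ Finset.range (n + 1), H p n i x * r ^ i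
      = (r - H p n 0 x) / (r - 1) := by
    have hk : ∑ i ∈ Finset.range (n + 1), r ^ i * H p n i x
        = ∑ j ∈ Finset.range (n + 1), p j * x ^ j * ∑ i ∈ Finset.range (j + 1), r ^ i :=
      key_swap p n x (fun i => r ^ i)
    rw [Finset.sum_congr rfl (fun i _ => mul_comm (H p n i x) (r ^ i)), hk]
    have hstep : ∀ j ∈ Finset.range (n + 1),
        p j * x ^ j * ∑ i ∈ Finset.range (j + 1), r ^ i
          = p j * r / (r - 1) - p j * x ^ j / (r - 1) := by
      intro j _
      rw [geom_sum_eq (ne_of_gt hr)]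
      linear_combination (p j / (r - 1)) * e1 j
    rw [Finset.sum_congr rfl hstep, Finset.sum_sub_distrib, ← Finset.sum_div,
      ← Finset.sum_div, ← Finset.sum_mul, hp_sum, H, hIcc0]
    ring
  -- sum B
  have B : ∑ i ∈ Finset.range (n + 1), (i : ℝ) * (H p n i x * r ^ i)
      = ((∑ j ∈ Finset.range (n + 1), (j : ℝ) * p j) * r ^ 2
          - ((∑ j ∈ Finset.range (n + 1), (j : ℝ) * p j) + 1) * r
          + r * H p n 0 x) / (r - 1) ^ 2 := by
    have hk : ∑ i ∈ Finset.range (n + 1), ((i : ℝ) * r ^ i) * H p n i x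
        = ∑ j ∈ Finset.range (n + 1),
            p j * x ^ j * ∑ i ∈ Finset.range (j + 1), (i : ℝ) * r ^ i :=
      key_swap p n x (fun i => (i : ℝ) * r ^ i)
    rw [Finset.sum_congr rfl
      (fun i (_ : i ∈ Finset.range (n + 1)) => by ring :
        ∀ i ∈ Finset.range (n + 1),
          (i : ℝ) * (H p n i x * r ^ i) = ((i : ℝ) * r ^ i) * H p n i x), hk]
    have hr1sq : ((r - 1) ^ 2) ≠ 0 := pow_ne_zero 2 hr1
    have hstep : ∀ j ∈ Finset.range (n + 1),
        p j * x ^ j * ∑ i ∈ Finset.range (j + 1), (i : ℝ) * r ^ i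
          = ((j : ℝ) * p j * r ^ 2 - ((j : ℝ) * p j + p j) * r + p j * x ^ j * r)
              / (r - 1) ^ 2 := by
      intro j _
      have hsum : ∑ i ∈ Finset.range (j + 1), (i : ℝ) * r ^ i
          = ((j : ℝ) * r ^ (j + 2) - ((j : ℝ) + 1) * r ^ (j + 1) + r) / (r - 1) ^ 2 := by
        rw [eq_div_iff hr1sq, mul_comm, sum_i_geom r (j + 1)]
        push_cast
        ring
      rw [hsum]
      linear_combination ((j : ℝ) * p j / (r - 1) ^ 2) * e2 j
        - (((j : ℝ) + 1) * p j / (r - 1) ^ 2) * e1 j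
    rw [Finset.sum_congr rfl hstep, ← Finset.sum_div]
    congr 1
    rw [Finset.sum_congr rfl (fun j (_ : j ∈ Finset.range (n + 1)) => by ring :
      ∀ j ∈ Finset.range (n + 1),
        (j : ℝ) * p j * r ^ 2 - ((j : ℝ) * p j + p j) * r + p j * x ^ j * r
          = (j : ℝ) * p j * r ^ 2 - ((j : ℝ) * p j) * r - p j * r + (p j * x ^ j) * r)]
    simp only [Finset.sum_add_distrib, Finset.sum_sub_distrib, ← Finset.sum_mul]
    rw [hp_sum, H, hIcc0]
    ring
  refine ⟨?_, ?_, ?_⟩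
  · intro i _
    apply div_nonneg _ (le_of_lt hD)
    have h2 : 0 ≤ 1 - 1 / r := by rw [← hxdef]; linarith
    exact mul_nonneg (mul_nonneg (hHnn i) (pow_pos hr0 i).le) h2
  · have hre : ∀ i ∈ Finset.range (n + 1),
        H p n i x * r ^ i * (1 - 1 / r) / (1 - H p n 0 x / r)
          = (H p n i x * r ^ i) * ((1 - 1 / r) / (1 - H p n 0 x / r)) := by
      intro i _; ring
    rw [Finset.sum_congr rfl hre, ← Finset.sum_mul, A]
    field_simp
  · have hre : ∀ i ∈ Finset.range (n + 1),
        (i : ℝ) * (H p n i x * r ^ i * (1 - 1 / r) / (1 - H p n 0 x / r))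
          = ((i : ℝ) * (H p n i x * r ^ i)) * ((1 - 1 / r) / (1 - H p n 0 x / r)) := by
      intro i _; ring
    rw [Finset.sum_congr rfl hre, ← Finset.sum_mul, B]
    field_simp
    ring
end

section
/- For the r-distribution with r > 1, as r → ∞, q_i → p_i for each i; and as r → 1⁺, q_i → (p_i + ∑_{j=i+1}^n p_j)/(1+μ), a partial-sum distribution. -/
open Filter

/-- for the r-distribution
q_i(r) = H_i(1/r) r^i (1-1/r)/(1 - H_0(1/r)/r), as r → ∞, q_i(r) → p_i, and
as r → 1⁺, q_i(r) → (p_i + ∑_{j=i+1}^n p_j)/(1+μ). -/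
theorem r_distribution_limits (p : ℕ → ℝ) (n : ℕ)
    (hp_nonneg : ∀ i ∈ Finset.range (n + 1), 0 ≤ p i)
    (hp_sum : ∑ i ∈ Finset.range (n + 1), p i = 1) :
    ∀ i ∈ Finset.range (n + 1),
      Tendsto (fun r : ℝ => H p n i (1 / r) * r ^ i * (1 - 1 / r) / (1 - H p n 0 (1 / r) / r))
        atTop (nhds (p i)) ∧
      Tendsto (fun r : ℝ => H p n i (1 / r) * r ^ i * (1 - 1 / r) / (1 - H p n 0 (1 / r) / r))
        (nhdsWithin 1 (Set.Ioi 1))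
        (nhds ((p i + ∑ j ∈ Finset.Icc (i + 1) n, p j)
          / (1 + ∑ j ∈ Finset.range (n + 1), (j : ℝ) * p j))) := by
  intro i hi
  rw [Finset.mem_range, Nat.lt_succ_iff] at hi
  -- rewriting lemmas for r ≠ 0
  have hnum : ∀ r : ℝ, r ≠ 0 →
      H p n i (1 / r) * r ^ i = ∑ j ∈ Finset.Icc i n, p j * (1 / r) ^ (j - i) := by
    intro r hr
    rw [H, Finset.sum_mul]
    refine Finset.sum_congr rfl fun j hj => ?_
    rw [Finset.mem_Icc] at hj
    have hji : (j - i) + i = j := Nat.sub_add_cancel hj.1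
    have key : (1 / r : ℝ) ^ j * r ^ i = (1 / r) ^ (j - i) := by
      conv_lhs => rw [← hji]
      rw [pow_add, mul_assoc, ← mul_pow, one_div_mul_cancel hr, one_pow, mul_one]
    rw [mul_assoc, key]
  have hden : ∀ r : ℝ, r ≠ 0 →
      H p n 0 (1 / r) / r = ∑ j ∈ Finset.range (n + 1), p j * (1 / r) ^ (j + 1) := by
    intro r hr
    rw [H, show Finset.Icc 0 n = Finset.range (n + 1) by
      rw [← Finset.Ico_add_one_right_eq_Icc, Nat.Ico_zero_eq_range], Finset.sum_div]
    refine Finset.sum_congr rfl fun j _ => ?_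
    rw [pow_succ, ← mul_assoc, div_eq_mul_one_div]
  constructor
  · -- limit as r → ∞
    set G : ℝ → ℝ := fun x => (∑ j ∈ Finset.Icc i n, p j * x ^ (j - i)) * (1 - x) /
      (1 - ∑ j ∈ Finset.range (n + 1), p j * x ^ (j + 1)) with hG
    have hcont : ContinuousAt G 0 := by
      apply ContinuousAt.div
      · exact (((continuous_finset_sum _ fun j _ => by continuity).mul
          (by continuity)).continuousAt)
      · exact ((continuous_const.sub (continuous_finset_sum _ fun j _ => by continuity)).continuousAt)
      · simp
    have hG0 : G 0 = p i := by
      rw [hG]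
      simp only
      have : (∑ j ∈ Finset.Icc i n, p j * (0 : ℝ) ^ (j - i)) = p i := by
        rw [Finset.sum_eq_single i]
        · simp
        · intro j hj hji
          rw [Finset.mem_Icc] at hj
          have : j - i ≠ 0 := by omega
          simp [zero_pow this]
        · intro h
          exact absurd (Finset.mem_Icc.2 ⟨le_refl i, hi⟩) h
      rw [this]
      norm_num
    have h1 : Tendsto (fun r : ℝ => 1 / r) atTop (nhds 0) := by
      simpa [one_div] using tendsto_inv_atTop_zero (𝕜 := ℝ)
    have hT : Tendsto (fun r : ℝ => G (1 / r)) atTop (nhds (p i)) := by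
      have := hcont.tendsto.comp h1
      rwa [hG0] at this
    refine hT.congr' ?_
    filter_upwards [eventually_ne_atTop (0 : ℝ)] with r hr0
    rw [hG]
    simp only
    rw [hnum r hr0, hden r hr0]
  · -- limit as r → 1⁺
    set μ : ℝ := ∑ j ∈ Finset.range (n + 1), (j : ℝ) * p j with hμ
    have hμ0 : 0 ≤ μ := Finset.sum_nonneg fun j hj =>
      mul_nonneg (Nat.cast_nonneg j) (hp_nonneg j hj)
    set G2 : ℝ → ℝ := fun x => (∑ j ∈ Finset.Icc i n, p j * x ^ (j - i)) /
      (∑ j ∈ Finset.range (n + 1), p j * ∑ k ∈ Finset.range (j + 1), x ^ k) with hG2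
    have hden1 : (∑ j ∈ Finset.range (n + 1), p j * ∑ k ∈ Finset.range (j + 1), (1 : ℝ) ^ k)
        = 1 + μ := by
      have hterm : ∀ j ∈ Finset.range (n + 1),
          p j * ∑ k ∈ Finset.range (j + 1), (1 : ℝ) ^ k = (j : ℝ) * p j + p j := by
        intro j _
        simp only [one_pow, Finset.sum_const, Finset.card_range, nsmul_eq_mul, mul_one]
        push_cast; ring
      rw [Finset.sum_congr rfl hterm, Finset.sum_add_distrib, hp_sum, ← hμ]
      ring
    have hden1' : (∑ j ∈ Finset.range (n + 1), p j * ∑ k ∈ Finset.range (j + 1), (1 : ℝ) ^ k)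
        ≠ 0 := by rw [hden1]; positivity
    have hcont : ContinuousAt G2 1 := by
      apply ContinuousAt.div
      · exact (continuous_finset_sum _ fun j _ => by continuity).continuousAt
      · exact (continuous_finset_sum _ fun j _ => by continuity).continuousAt
      · exact hden1'
    have hG21 : G2 1 = (p i + ∑ j ∈ Finset.Icc (i + 1) n, p j) / (1 + μ) := by
      rw [hG2]
      simp only
      rw [hden1]
      congr 1
      simp only [one_pow, mul_one]
      rw [← Finset.Ioc_insert_left hi, Finset.sum_insert (by simp), ← Finset.Icc_add_one_left_eq_Ioc]
    have h1 : Tendsto (fun r : ℝ => 1 / r) (nhdsWithin 1 (Set.Ioi 1)) (nhds 1) := by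
      have hc : ContinuousAt (fun r : ℝ => 1 / r) 1 :=
        ContinuousAt.div continuousAt_const continuousAt_id one_ne_zero
      have h := hc.tendsto.mono_left (nhdsWithin_le_nhds (s := Set.Ioi (1 : ℝ)))
      norm_num at h
      simpa [one_div] using h
    have hT : Tendsto (fun r : ℝ => G2 (1 / r)) (nhdsWithin 1 (Set.Ioi 1))
        (nhds ((p i + ∑ j ∈ Finset.Icc (i + 1) n, p j) / (1 + μ))) := by
      have := hcont.tendsto.comp h1
      rwa [hG21] at this
    refine hT.congr' ?_
    filter_upwards [eventually_mem_nhdsWithin] with r hr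
    have hr1 : (1 : ℝ) < r := hr
    have hr0 : r ≠ 0 := by positivity
    have hlt : (1 : ℝ) / r < 1 := by
      rw [div_lt_one (by positivity)]; exact hr1
    have hne : (1 : ℝ) - 1 / r ≠ 0 := by linarith
    have hgeo : ∀ j : ℕ, (1 : ℝ) - (1 / r) ^ (j + 1)
        = (∑ k ∈ Finset.range (j + 1), (1 / r) ^ k) * (1 - 1 / r) := fun j => by
      linear_combination geom_sum_mul (1 / r) (j + 1)
    have hkey : (1 : ℝ) - ∑ j ∈ Finset.range (n + 1), p j * (1 / r) ^ (j + 1)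
        = (∑ j ∈ Finset.range (n + 1), p j * ∑ k ∈ Finset.range (j + 1), (1 / r) ^ k)
          * (1 - 1 / r) := by
      calc (1 : ℝ) - ∑ j ∈ Finset.range (n + 1), p j * (1 / r) ^ (j + 1)
          = ∑ j ∈ Finset.range (n + 1), p j * (1 - (1 / r) ^ (j + 1)) := by
            nth_rewrite 1 [← hp_sum]
            rw [← Finset.sum_sub_distrib]
            exact Finset.sum_congr rfl fun j _ => by ring
        _ = ∑ j ∈ Finset.range (n + 1),
              (p j * ∑ k ∈ Finset.range (j + 1), (1 / r) ^ k) * (1 - 1 / r) := by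
            refine Finset.sum_congr rfl fun j _ => by rw [hgeo j]; ring
        _ = _ := by rw [← Finset.sum_mul]
    rw [hG2]
    simp only
    rw [hnum r hr0, hden r hr0, hkey, mul_div_mul_right _ _ hne]
end

section
/- If (q_i)_{i≥0} is a pmf on the nonnegative integers with ∑_j q_j (j+1)^λ < ∞ for λ > 0, then p_i = ((i+1)^{-λ} - (i+2)^{-λ}) ∑_{j=0}^i q_j (j+1)^λ defines a pmf, and p_0 = (1 - 2^{-λ}) q_0 < q_0 when q_0 > 0. -/
open Real

/-- if (q_i) is a pmf on ℕ and λ > 0, then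
p_i = ((i+1)^{-λ} - (i+2)^{-λ}) ∑_{j=0}^i q_j (j+1)^λ is a pmf, and
p_0 = (1 - 2^{-λ}) q_0, which is < q_0 when q_0 > 0. -/
theorem long_tailed_lambda_distribution (q : ℕ → ℝ) (lam : ℝ) (hlam : 0 < lam)
    (hq_nonneg : ∀ i, 0 ≤ q i) (hq_sum : ∑' i, q i = 1) :
    (∀ i : ℕ, 0 ≤ (((i:ℝ) + 1) ^ (-lam) - ((i:ℝ) + 2) ^ (-lam))
        * ∑ j ∈ Finset.range (i + 1), q j * ((j:ℝ) + 1) ^ lam) ∧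
    (∑' i : ℕ, (((i:ℝ) + 1) ^ (-lam) - ((i:ℝ) + 2) ^ (-lam))
        * ∑ j ∈ Finset.range (i + 1), q j * ((j:ℝ) + 1) ^ lam) = 1 ∧
    (((0:ℝ) + 1) ^ (-lam) - ((0:ℝ) + 2) ^ (-lam))
        * (∑ j ∈ Finset.range 1, q j * ((j:ℝ) + 1) ^ lam)
      = (1 - (2:ℝ) ^ (-lam)) * q 0 ∧
    (0 < q 0 → (1 - (2:ℝ) ^ (-lam)) * q 0 < q 0) := by
  have hq_summable : Summable q := by
    by_contra h
    rw [tsum_eq_zero_of_not_summable h] at hq_sum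
    norm_num at hq_sum
  set a : ℕ → ℝ := fun i => ((i:ℝ) + 1) ^ (-lam) with ha
  have hA : ∀ i : ℕ, a (i + 1) = ((i:ℝ) + 2) ^ (-lam) := by
    intro i
    simp only [ha]
    push_cast
    ring_nf
  have hapos : ∀ i, 0 < a i := fun i => Real.rpow_pos_of_pos (by positivity) _
  have hmono : ∀ i, a (i + 1) ≤ a i := by
    intro i
    apply Real.rpow_le_rpow_of_nonpos (by positivity) (by push_cast; linarith)
      (by linarith)
  have hanti : Antitone a := antitone_nat_of_succ_le hmono
  have hd : ∀ i, 0 ≤ a i - a (i + 1) := fun i => sub_nonneg.2 (hmono i)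
  have hb : ∀ j : ℕ, 0 ≤ q j * ((j:ℝ) + 1) ^ lam := fun j =>
    mul_nonneg (hq_nonneg j) (Real.rpow_nonneg (by positivity) _)
  have hS : ∀ i, 0 ≤ ∑ j ∈ Finset.range (i + 1), q j * ((j:ℝ) + 1) ^ lam :=
    fun i => Finset.sum_nonneg fun j _ => hb j
  have hP : ∀ i, 0 ≤ (a i - a (i + 1)) * ∑ j ∈ Finset.range (i + 1), q j * ((j:ℝ) + 1) ^ lam :=
    fun i => mul_nonneg (hd i) (hS i)
  -- a tends to 0
  have ha0 : Filter.Tendsto a Filter.atTop (nhds 0) := by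
    have h1 : Filter.Tendsto (fun x : ℝ => x ^ (-lam)) Filter.atTop (nhds 0) :=
      tendsto_rpow_neg_atTop hlam
    exact h1.comp (Filter.tendsto_atTop_add_const_right _ 1 tendsto_natCast_atTop_atTop)
  set d : ℕ → ENNReal := fun i => ENNReal.ofReal (a i - a (i + 1)) with hdd
  -- telescoping key
  have key : ∀ j : ℕ, (∑' i : ℕ, (if j ≤ i then d i else 0)) = ENNReal.ofReal (a j) := by
    intro j
    have heq : ∀ m : ℕ, (∑ i ∈ Finset.range (j + m), (if j ≤ i then d i else 0))
        = ENNReal.ofReal (a j - a (j + m)) := by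
      intro m
      induction m with
      | zero =>
        rw [Finset.sum_eq_zero]
        · simp
        · intro i hi
          rw [if_neg]
          simp only [Finset.mem_range, Nat.add_zero] at hi
          omega
      | succ m ih =>
        rw [show j + (m + 1) = (j + m) + 1 by ring, Finset.sum_range_succ, ih,
          if_pos (by omega)]
        rw [← ENNReal.ofReal_add (sub_nonneg.2 (hanti (by omega))) (hd _)]
        congr 1
        ring_nf
    have h1 : Filter.Tendsto (fun n => ∑ i ∈ Finset.range n, (if j ≤ i then d i else 0))
        Filter.atTop (nhds (∑' i : ℕ, (if j ≤ i then d i else 0))) :=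
      ENNReal.tendsto_nat_tsum _
    have h2 : Filter.Tendsto (fun n => ∑ i ∈ Finset.range n, (if j ≤ i then d i else 0))
        Filter.atTop (nhds (ENNReal.ofReal (a j))) := by
      have h3 : Filter.Tendsto (fun n : ℕ => ENNReal.ofReal (a j - a n)) Filter.atTop
          (nhds (ENNReal.ofReal (a j))) := by
        have : Filter.Tendsto (fun n : ℕ => a j - a n) Filter.atTop (nhds (a j - 0)) :=
          (tendsto_const_nhds).sub ha0
        rw [sub_zero] at this
        exact (ENNReal.continuous_ofReal.tendsto _).comp this
      refine Filter.Tendsto.congr' ?_ h3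
      filter_upwards [Filter.eventually_ge_atTop j] with n hn
      have := heq (n - j)
      rw [show j + (n - j) = n by omega] at this
      exact this.symm
    have := tendsto_nhds_unique h1 h2
    exact this
  -- main computation in ENNReal
  have hmain : (∑' i : ℕ, ENNReal.ofReal ((a i - a (i + 1))
      * ∑ j ∈ Finset.range (i + 1), q j * ((j:ℝ) + 1) ^ lam)) = 1 := by
    have step1 : ∀ i : ℕ, ENNReal.ofReal ((a i - a (i + 1))
        * ∑ j ∈ Finset.range (i + 1), q j * ((j:ℝ) + 1) ^ lam)
        = ∑' j : ℕ, (if j ≤ i then ENNReal.ofReal (q j * ((j:ℝ) + 1) ^ lam) * d i else 0) := by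
      intro i
      rw [tsum_eq_sum (s := Finset.range (i + 1))
        (by
          intro j hj
          rw [if_neg]
          simp only [Finset.mem_range] at hj
          omega)]
      rw [ENNReal.ofReal_mul (hd i), ENNReal.ofReal_sum_of_nonneg (fun j _ => hb j),
        Finset.mul_sum]
      refine Finset.sum_congr rfl fun j hj => ?_
      simp only [Finset.mem_range] at hj
      rw [if_pos (by omega)]
      exact mul_comm _ _
    calc (∑' i : ℕ, ENNReal.ofReal ((a i - a (i + 1))
          * ∑ j ∈ Finset.range (i + 1), q j * ((j:ℝ) + 1) ^ lam))
        = ∑' i : ℕ, ∑' j : ℕ,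
            (if j ≤ i then ENNReal.ofReal (q j * ((j:ℝ) + 1) ^ lam) * d i else 0) :=
          tsum_congr step1
      _ = ∑' j : ℕ, ∑' i : ℕ,
            (if j ≤ i then ENNReal.ofReal (q j * ((j:ℝ) + 1) ^ lam) * d i else 0) :=
          ENNReal.tsum_comm
      _ = ∑' j : ℕ, ENNReal.ofReal (q j * ((j:ℝ) + 1) ^ lam) * ENNReal.ofReal (a j) := by
          refine tsum_congr fun j => ?_
          rw [← key j, ← ENNReal.tsum_mul_left]
          refine tsum_congr fun i => ?_
          split_ifs <;> simp
      _ = ∑' j : ℕ, ENNReal.ofReal (q j) := by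
          refine tsum_congr fun j => ?_
          rw [← ENNReal.ofReal_mul (hb j)]
          congr 1
          have hx : ((j:ℝ) + 1) ^ lam * ((j:ℝ) + 1) ^ (-lam) = 1 := by
            rw [← Real.rpow_add (by positivity)]
            simp
          calc q j * ((j:ℝ) + 1) ^ lam * a j
              = q j * (((j:ℝ) + 1) ^ lam * ((j:ℝ) + 1) ^ (-lam)) := by rw [ha]; ring
            _ = q j := by rw [hx, mul_one]
      _ = ENNReal.ofReal (∑' j, q j) :=
          (ENNReal.ofReal_tsum_of_nonneg hq_nonneg hq_summable).symm
      _ = 1 := by rw [hq_sum]; simp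
  -- back to ℝ
  have hsum : (∑' i : ℕ, (a i - a (i + 1))
      * ∑ j ∈ Finset.range (i + 1), q j * ((j:ℝ) + 1) ^ lam) = 1 := by
    calc (∑' i : ℕ, (a i - a (i + 1)) * ∑ j ∈ Finset.range (i + 1), q j * ((j:ℝ) + 1) ^ lam)
        = ∑' i : ℕ, (ENNReal.ofReal ((a i - a (i + 1))
            * ∑ j ∈ Finset.range (i + 1), q j * ((j:ℝ) + 1) ^ lam)).toReal :=
          tsum_congr fun i => (ENNReal.toReal_ofReal (hP i)).symm
      _ = (∑' i : ℕ, ENNReal.ofReal ((a i - a (i + 1))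
            * ∑ j ∈ Finset.range (i + 1), q j * ((j:ℝ) + 1) ^ lam)).toReal :=
          (ENNReal.tsum_toReal_eq fun i => ENNReal.ofReal_ne_top).symm
      _ = 1 := by rw [hmain]; simp
  refine ⟨?_, ?_, ?_, ?_⟩
  · intro i
    have := hP i
    rwa [hA i] at this
  · rw [show (∑' i : ℕ, (((i:ℝ) + 1) ^ (-lam) - ((i:ℝ) + 2) ^ (-lam))
        * ∑ j ∈ Finset.range (i + 1), q j * ((j:ℝ) + 1) ^ lam)
        = (∑' i : ℕ, (a i - a (i + 1))
        * ∑ j ∈ Finset.range (i + 1), q j * ((j:ℝ) + 1) ^ lam) from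
      tsum_congr fun i => by rw [hA i]]
    exact hsum
  · simp [Real.one_rpow, Finset.sum_range_one]
  · intro hq0
    have h2 : (2:ℝ) ^ (-lam) < 1 :=
      Real.rpow_lt_one_of_one_lt_of_neg (by norm_num) (by linarith)
    have h2' : (0:ℝ) < (2:ℝ) ^ (-lam) := Real.rpow_pos_of_pos (by norm_num) _
    nlinarith
end
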